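/- Let P*_{W|XY} be an optimal test channel achieving R(r1*,r2*|P_XY), and let P_{W*}, P_{X|W*}, P_{Y|W*} be the induced output distribution and conditional distributions. Then for every (x,y) in the support of P_XY and every w in the support of P*_{W|XY}(·|x,y), Λ(x,y|P_{W*},P_{X|W*},P_{Y|W*},λ1*,λ2*) = log( P*_{W|XY}(w|x,y) / P_{W*}(w) ) + λ1*( log(1/P_{X|W*}(x|w)) − r1* ) + λ2*( log(1/P_{Y|W*}(y|w)) − r2* ); in particular the right-hand side does not depend on the choice of such w. -/

import Mathlib

open Finset Filter MeasureTheory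

attribute [local instance] Classical.propDecidable

namespace GW

noncomputable section

/-- Shannon entropy (base 2) of a distribution on a finite alphabet,
with the convention `0 * log 0 = 0`. -/
def ent {α : Type*} [Fintype α] (p : α → ℝ) : ℝ := -∑ a, p a * Real.logb 2 (p a)

/-- `p` is a probability distribution on a finite alphabet. -/
def IsProb {α : Type*} [Fintype α] (p : α → ℝ) : Prop :=
  (∀ a, 0 ≤ p a) ∧ ∑ a, p a = 1

/-- `K` is a channel (a conditional probability distribution). -/
def IsChannel {α β : Type*} [Fintype α] [Fintype β] (K : α → β → ℝ) : Prop :=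
  ∀ a, IsProb (K a)

variable {𝒳 𝒴 𝒲 : Type*} [Fintype 𝒳] [Fintype 𝒴] [Fintype 𝒲]

/-- Output distribution `P_W` on `𝒲` induced by the source `p` on `𝒳 × 𝒴`
and the test channel `K`. -/
def outW (p : 𝒳 × 𝒴 → ℝ) (K : 𝒳 × 𝒴 → 𝒲 → ℝ) (w : 𝒲) : ℝ := ∑ a, p a * K a w

/-- Joint distribution of `(W, X, Y)`. -/
def jointW (p : 𝒳 × 𝒴 → ℝ) (K : 𝒳 × 𝒴 → 𝒲 → ℝ) : 𝒲 × 𝒳 × 𝒴 → ℝ :=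
  fun z => p z.2 * K z.2 z.1

/-- Joint distribution of `(W, X)`. -/
def margWX (p : 𝒳 × 𝒴 → ℝ) (K : 𝒳 × 𝒴 → 𝒲 → ℝ) : 𝒲 × 𝒳 → ℝ :=
  fun z => ∑ y, p (z.2, y) * K (z.2, y) z.1

/-- Joint distribution of `(W, Y)`. -/
def margWY (p : 𝒳 × 𝒴 → ℝ) (K : 𝒳 × 𝒴 → 𝒲 → ℝ) : 𝒲 × 𝒴 → ℝ :=
  fun z => ∑ x, p (x, z.2) * K (x, z.2) z.1

/-- Mutual information `I(W ∧ X,Y)` (base 2). -/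
def mutInfoW (p : 𝒳 × 𝒴 → ℝ) (K : 𝒳 × 𝒴 → 𝒲 → ℝ) : ℝ :=
  ent (outW p K) + ent p - ent (jointW p K)

/-- Conditional entropy `H(X|W)`. -/
def condEntX (p : 𝒳 × 𝒴 → ℝ) (K : 𝒳 × 𝒴 → 𝒲 → ℝ) : ℝ :=
  ent (margWX p K) - ent (outW p K)

/-- Conditional entropy `H(Y|W)`. -/
def condEntY (p : 𝒳 × 𝒴 → ℝ) (K : 𝒳 × 𝒴 → 𝒲 → ℝ) : ℝ :=
  ent (margWY p K) - ent (outW p K)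

/-- Conditional distribution `P_{X|W}` induced by `p` and `K`. -/
def condXW (p : 𝒳 × 𝒴 → ℝ) (K : 𝒳 × 𝒴 → 𝒲 → ℝ) (w : 𝒲) (x : 𝒳) : ℝ :=
  margWX p K (w, x) / outW p K w

/-- Conditional distribution `P_{Y|W}` induced by `p` and `K`. -/
def condYW (p : 𝒳 × 𝒴 → ℝ) (K : 𝒳 × 𝒴 → 𝒲 → ℝ) (w : 𝒲) (y : 𝒴) : ℝ :=
  margWY p K (w, y) / outW p K w

/-- The Gray–Wyner first-order rate function
`R(r1,r2|P) = min { I(W ∧ X,Y) : |𝒲| ≤ |𝒳||𝒴|+2, H(X|W) ≤ r1, H(Y|W) ≤ r2 }`. -/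
def Rgw (p : 𝒳 × 𝒴 → ℝ) (r1 r2 : ℝ) : ℝ :=
  sInf { ρ : ℝ | ∃ k, k ≤ Fintype.card 𝒳 * Fintype.card 𝒴 + 2 ∧
    ∃ K : 𝒳 × 𝒴 → Fin k → ℝ, IsChannel K ∧
      condEntX p K ≤ r1 ∧ condEntY p K ≤ r2 ∧ ρ = mutInfoW p K }

/-- `K` is an optimal test channel achieving `R(r1,r2|p)`. -/
def IsOptChannel (p : 𝒳 × 𝒴 → ℝ) (r1 r2 : ℝ) {k : ℕ} (K : 𝒳 × 𝒴 → Fin k → ℝ) : Prop :=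
  k ≤ Fintype.card 𝒳 * Fintype.card 𝒴 + 2 ∧ IsChannel K ∧
    condEntX p K ≤ r1 ∧ condEntY p K ≤ r2 ∧ mutInfoW p K = Rgw p r1 r2

/-- The function `Λ(x,y|Q_W̄, Q_{X̂|Ŵ}, Q_{Ŷ|Ŵ}, λ1, λ2)`;
terms with a vanishing conditional probability are taken to be `0`. -/
def Lam (r1 r2 lam1 lam2 : ℝ) (QW : 𝒲 → ℝ) (QX : 𝒲 → 𝒳 → ℝ) (QY : 𝒲 → 𝒴 → ℝ)
    (x : 𝒳) (y : 𝒴) : ℝ :=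
  - Real.logb 2 (∑ w, QW w *
      (if QX w x = 0 ∨ QY w y = 0 then 0 else
        (2 : ℝ) ^ (lam1 * (r1 + Real.logb 2 (QX w x)) + lam2 * (r2 + Real.logb 2 (QY w y)))))

/-- The function
`F(P_{W|XY},P_W̄,P_{X̂|Ŵ},P_{Ŷ|Ŵ}) = D(P_{W|XY}‖P_W̄|P_XY) + λ1 E[log 1/P_{X̂|Ŵ}(X|W) - r1] + λ2 E[log 1/P_{Ŷ|Ŵ}(Y|W) - r2]`. -/
def Ffun (p : 𝒳 × 𝒴 → ℝ) (r1 r2 lam1 lam2 : ℝ) (K : 𝒳 × 𝒴 → 𝒲 → ℝ)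
    (QW : 𝒲 → ℝ) (QX : 𝒲 → 𝒳 → ℝ) (QY : 𝒲 → 𝒴 → ℝ) : ℝ :=
  (∑ a : 𝒳 × 𝒴, ∑ w, p a * K a w * Real.logb 2 (K a w / QW w))
    + lam1 * (∑ a : 𝒳 × 𝒴, ∑ w, p a * K a w * (-Real.logb 2 (QX w a.1) - r1))
    + lam2 * (∑ a : 𝒳 × 𝒴, ∑ w, p a * K a w * (-Real.logb 2 (QY w a.2) - r2))

/-- The tilted information density for the Gray–Wyner network, built from an
(optimal) test channel `K` via its induced output and conditional distributions. -/
def tiltedInfo (p : 𝒳 × 𝒴 → ℝ) (r1 r2 lam1 lam2 : ℝ) {k : ℕ}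
    (K : 𝒳 × 𝒴 → Fin k → ℝ) (x : 𝒳) (y : 𝒴) : ℝ :=
  Lam r1 r2 lam1 lam2 (outW p K) (condXW p K) (condYW p K) x y

/-- The explicit optimizing channel of Lemma 1. -/
def Kstar (r1 r2 lam1 lam2 : ℝ) (QW : 𝒲 → ℝ) (QX : 𝒲 → 𝒳 → ℝ) (QY : 𝒲 → 𝒴 → ℝ) :
    𝒳 × 𝒴 → 𝒲 → ℝ :=
  fun a w => if QX w a.1 = 0 ∨ QY w a.2 = 0 then 0 else
    QW w * (2 : ℝ) ^ (Lam r1 r2 lam1 lam2 QW QX QY a.1 a.2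
      + lam1 * (r1 + Real.logb 2 (QX w a.1)) + lam2 * (r2 + Real.logb 2 (QY w a.2)))

/-- A Gray–Wyner code of blocklength `n` with message sets of sizes `M0`, `M1`, `M2`. -/
structure GWCode (𝒳 𝒴 : Type*) (n M0 M1 M2 : ℕ) where
  enc0 : (Fin n → 𝒳 × 𝒴) → Fin M0
  enc1 : (Fin n → 𝒳 × 𝒴) → Fin M1
  enc2 : (Fin n → 𝒳 × 𝒴) → Fin M2
  dec1 : Fin M0 × Fin M1 → Fin n → 𝒳
  dec2 : Fin M0 × Fin M2 → Fin n → 𝒴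

/-- Correct decoding of the source word `f`. -/
def GWCode.correct {𝒳 𝒴 : Type*} {n M0 M1 M2 : ℕ} (C : GWCode 𝒳 𝒴 n M0 M1 M2)
    (f : Fin n → 𝒳 × 𝒴) : Prop :=
  ∀ i, C.dec1 (C.enc0 f, C.enc1 f) i = (f i).1 ∧ C.dec2 (C.enc0 f, C.enc2 f) i = (f i).2

/-- Error probability of a code under the source distribution `P` on words. -/
def PeGW {n M0 M1 M2 : ℕ} (C : GWCode 𝒳 𝒴 n M0 M1 M2) (P : (Fin n → 𝒳 × 𝒴) → ℝ) : ℝ :=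
  ∑ f ∈ Finset.univ.filter (fun f => ¬ C.correct f), P f

/-- Correct probability of a code. -/
def PcGW {n M0 M1 M2 : ℕ} (C : GWCode 𝒳 𝒴 n M0 M1 M2) (P : (Fin n → 𝒳 × 𝒴) → ℝ) : ℝ :=
  1 - PeGW C P

/-- The i.i.d. (product) distribution on length-`n` source words. -/
def prodDist (p : 𝒳 × 𝒴 → ℝ) (n : ℕ) : (Fin n → 𝒳 × 𝒴) → ℝ := fun f => ∏ i, p (f i)

/-- First-order achievability of a rate triple for the Gray–Wyner network. -/
def GWAchievable (p : 𝒳 × 𝒴 → ℝ) (r0 r1 r2 : ℝ) : Prop :=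
  ∃ (M0 M1 M2 : ℕ → ℕ) (C : (n : ℕ) → GWCode 𝒳 𝒴 n (M0 n) (M1 n) (M2 n)),
    limsup (fun n : ℕ => Real.logb 2 (M0 n) / n) atTop ≤ r0 ∧
    limsup (fun n : ℕ => Real.logb 2 (M1 n) / n) atTop ≤ r1 ∧
    limsup (fun n : ℕ => Real.logb 2 (M2 n) / n) atTop ≤ r2 ∧
    Tendsto (fun n : ℕ => PeGW (C n) (prodDist p n)) atTop (nhds 0)

/-- Second-order `(ε, r0*, r1*, r2*)`-achievability of `(L0, L1, L2)`. -/
def GWSecondAchievable (p : 𝒳 × 𝒴 → ℝ) (ε r0 r1 r2 L0 L1 L2 : ℝ) : Prop :=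
  ∃ (M0 M1 M2 : ℕ → ℕ) (C : (n : ℕ) → GWCode 𝒳 𝒴 n (M0 n) (M1 n) (M2 n)),
    limsup (fun n : ℕ => (Real.logb 2 (M0 n) - n * r0) / Real.sqrt n) atTop ≤ L0 ∧
    limsup (fun n : ℕ => (Real.logb 2 (M1 n) - n * r1) / Real.sqrt n) atTop ≤ L1 ∧
    limsup (fun n : ℕ => (Real.logb 2 (M2 n) - n * r2) / Real.sqrt n) atTop ≤ L2 ∧
    limsup (fun n : ℕ => PeGW (C n) (prodDist p n)) atTop ≤ ε

/-- Empirical distribution (type) of a sequence. -/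
def empDist {α : Type*} [Fintype α] {n : ℕ} (f : Fin n → α) (a : α) : ℝ :=
  ((Finset.univ.filter fun i => f i = a).card : ℝ) / n

/-- `p` is a type of length-`n` sequences. -/
def IsJointType {α : Type*} [Fintype α] (n : ℕ) (p : α → ℝ) : Prop :=
  ∃ f : Fin n → α, ∀ a, p a = empDist f a

/-- `V` is a conditional type (of length `n`) given the joint type `p`. -/
def IsCondType (n : ℕ) (p : 𝒳 × 𝒴 → ℝ) (V : 𝒳 × 𝒴 → 𝒲 → ℝ) : Prop :=
  IsChannel V ∧ ∀ a, 0 < p a → ∀ w, ∃ c : ℕ, V a w = c / (n * p a)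

/-- The uniform distribution on the type class of the joint type `p`. -/
def unifType (n : ℕ) (p : 𝒳 × 𝒴 → ℝ) : (Fin n → 𝒳 × 𝒴) → ℝ :=
  fun f => if ∀ a, empDist f a = p a then
    (1 : ℝ) / ((Finset.univ.filter fun g : Fin n → 𝒳 × 𝒴 => ∀ a, empDist g a = p a).card : ℝ)
  else 0

/-- The single-letter Gray–Wyner region `ℛ*_GW(P_XY)`. -/
def RegionGW (p : 𝒳 × 𝒴 → ℝ) : Set (ℝ × ℝ × ℝ) :=
  { r | ∃ k, k ≤ Fintype.card 𝒳 * Fintype.card 𝒴 + 2 ∧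
      ∃ K : 𝒳 × 𝒴 → Fin k → ℝ, IsChannel K ∧
        mutInfoW p K ≤ r.1 ∧ condEntX p K ≤ r.2.1 ∧ condEntY p K ≤ r.2.2 }

/-- `X - W - Y` forms a Markov chain (conditional independence given `W`). -/
def MarkovXWY {k : ℕ} (p : 𝒳 × 𝒴 → ℝ) (K : 𝒳 × 𝒴 → Fin k → ℝ) : Prop :=
  ∀ w x y, jointW p K (w, (x, y)) * outW p K w = margWX p K (w, x) * margWY p K (w, y)

/-- The part of the region lying on the Pangloss plane `r0 + r1 + r2 = H(X,Y)`. -/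
def PanglossSet (p : 𝒳 × 𝒴 → ℝ) : Set (ℝ × ℝ × ℝ) :=
  { r | r ∈ RegionGW p ∧ r.1 + r.2.1 + r.2.2 = ent p }

/-- The distribution corresponding to the parameter `θ`, with respect to the
labelling `e` of the support: `P_θ(e i) = θ i` for `i < m`, and the last mass
is `1 - ∑ θ`. -/
def paramDist {α : Type*} {m : ℕ} (e : Fin (m + 1) → α) (θ : Fin m → ℝ) (a : α) : ℝ :=
  (∑ i : Fin m, if e i.castSucc = a then θ i else 0) +
    (if e (Fin.last m) = a then 1 - ∑ i, θ i else 0)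

/-- Variance of `g` under the distribution `p`. -/
def varOf {α : Type*} [Fintype α] (p : α → ℝ) (g : α → ℝ) : ℝ :=
  ∑ a, p a * (g a - ∑ b, p b * g b) ^ 2

/-- The Gaussian upper-tail probability `Q(t)`. -/
def Qfun (t : ℝ) : ℝ :=
  ∫ u in Set.Ioi t, (1 / Real.sqrt (2 * Real.pi)) * Real.exp (-(u ^ 2) / 2)

end

end GW

open GW

namespace GWAux

open Real Finset
open GW

noncomputable section

variable {𝒳 𝒴 : Type*} [Fintype 𝒳] [Fintype 𝒴]

/-- Gibbs' inequality. -/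
lemma gibbs {α : Type*} [Fintype α] (f g : α → ℝ) (hf : ∀ a, 0 ≤ f a)
    (hf1 : ∑ a, f a = 1) (hg1 : ∑ a, g a ≤ 1) (hg : ∀ a, 0 ≤ g a)
    (hac : ∀ a, g a = 0 → f a = 0) :
    0 ≤ ∑ a, f a * Real.logb 2 (f a / g a) := by
  have hlog2 : (0:ℝ) < Real.log 2 := Real.log_pos (by norm_num)
  have key : ∀ a, (f a - g a) / Real.log 2 ≤ f a * Real.logb 2 (f a / g a) := by
    intro a
    rcases eq_or_lt_of_le (hf a) with h0 | hpos
    · rw [← h0]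
      simp only [zero_mul]
      have := hg a
      rw [div_le_iff₀ hlog2]
      nlinarith
    · have hga : 0 < g a := lt_of_le_of_ne (hg a) (fun h => by
        have := hac a h.symm; linarith)
      have h1 : Real.log (g a / f a) ≤ g a / f a - 1 :=
        Real.log_le_sub_one_of_pos (by positivity)
      have h2 : Real.log (f a / g a) = - Real.log (g a / f a) := by
        rw [← Real.log_inv]
        congr 1
        field_simp
      have h3 : 1 - g a / f a ≤ Real.log (f a / g a) := by rw [h2]; linarith
      have h4 : f a - g a ≤ f a * Real.log (f a / g a) := by
        have := mul_le_mul_of_nonneg_left h3 (le_of_lt hpos)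
        calc f a - g a = f a * (1 - g a / f a) := by field_simp
        _ ≤ f a * Real.log (f a / g a) := this
      rw [Real.logb, div_le_iff₀ hlog2]
      calc f a - g a ≤ f a * Real.log (f a / g a) := h4
      _ = f a * (Real.log (f a / g a) / Real.log 2) * Real.log 2 := by field_simp
  calc (0:ℝ) ≤ (∑ a, (f a - g a)) / Real.log 2 := by
        rw [Finset.sum_sub_distrib, hf1]
        apply div_nonneg _ (le_of_lt hlog2)
        linarith
  _ = ∑ a, (f a - g a) / Real.log 2 := by rw [← Finset.sum_div]
  _ ≤ ∑ a, f a * Real.logb 2 (f a / g a) := Finset.sum_le_sum (fun a _ => key a)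

/-- Entropy decomposition (chain rule). -/
lemma ent_decomp {W A : Type*} [Fintype W] [Fintype A] (μ : W → ℝ) (q : W → A → ℝ)
    (hμ : ∀ w, 0 ≤ μ w) (hq0 : ∀ w a, 0 ≤ q w a) (hq1 : ∀ w, μ w ≠ 0 → ∑ a, q w a = 1) :
    ent (fun z : W × A => μ z.1 * q z.1 z.2) = ent μ + ∑ w, μ w * ent (q w) := by
  have key : ∀ w a, μ w * q w a * Real.logb 2 (μ w * q w a)
      = q w a * (μ w * Real.logb 2 (μ w)) + μ w * (q w a * Real.logb 2 (q w a)) := by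
    intro w a
    rcases eq_or_lt_of_le (hμ w) with h0 | hμpos
    · simp [← h0]
    rcases eq_or_lt_of_le (hq0 w a) with h0 | hqpos
    · simp [← h0]
    rw [Real.logb_mul (ne_of_gt hμpos) (ne_of_gt hqpos)]
    ring
  simp only [ent, Fintype.sum_prod_type]
  have : ∀ w, ∑ a, μ w * q w a * Real.logb 2 (μ w * q w a)
      = μ w * Real.logb 2 (μ w) + μ w * ∑ a, q w a * Real.logb 2 (q w a) := by
    intro w
    rcases eq_or_ne (μ w) 0 with h0 | hne
    · simp [h0]
    · rw [Finset.sum_congr rfl (fun a _ => key w a), Finset.sum_add_distrib,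
        ← Finset.sum_mul, hq1 w hne, ← Finset.mul_sum]
      ring
  rw [Finset.sum_congr rfl (fun w _ => this w), Finset.sum_add_distrib, neg_add]
  congr 1
  rw [← Finset.sum_neg_distrib]
  exact Finset.sum_congr rfl (fun w _ => by ring)

end

end GWAux
namespace GWAux
set_option linter.unusedVariables false
set_option linter.unusedSectionVars false

open Real Finset
open GW

noncomputable section

variable {𝒳 𝒴 𝒲 : Type*} [Fintype 𝒳] [Fintype 𝒴] [Fintype 𝒲]

section basics

variable (p : 𝒳 × 𝒴 → ℝ) (K : 𝒳 × 𝒴 → 𝒲 → ℝ)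

lemma outW_nonneg (hp : ∀ a, 0 ≤ p a) (hK : IsChannel K) (w : 𝒲) :
    0 ≤ outW p K w :=
  Finset.sum_nonneg fun a _ => mul_nonneg (hp a) ((hK a).1 w)

lemma sum_outW (hp : IsProb p) (hK : IsChannel K) : ∑ w, outW p K w = 1 := by
  simp only [outW]
  rw [Finset.sum_comm]
  calc ∑ a, ∑ w, p a * K a w = ∑ a : 𝒳 × 𝒴, p a := by
        refine Finset.sum_congr rfl fun a _ => ?_
        rw [← Finset.mul_sum, (hK a).2, mul_one]
  _ = 1 := hp.2

lemma pK_le_outW (hp : ∀ a, 0 ≤ p a) (hK : IsChannel K) (a : 𝒳 × 𝒴) (w : 𝒲) :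
    p a * K a w ≤ outW p K w :=
  Finset.single_le_sum (fun a' _ => mul_nonneg (hp a') ((hK a').1 w)) (Finset.mem_univ a)

lemma margWX_nonneg (hp : ∀ a, 0 ≤ p a) (hK : IsChannel K) (w : 𝒲) (x : 𝒳) :
    0 ≤ margWX p K (w, x) :=
  Finset.sum_nonneg fun y _ => mul_nonneg (hp _) ((hK _).1 w)

lemma margWY_nonneg (hp : ∀ a, 0 ≤ p a) (hK : IsChannel K) (w : 𝒲) (y : 𝒴) :
    0 ≤ margWY p K (w, y) :=
  Finset.sum_nonneg fun x _ => mul_nonneg (hp _) ((hK _).1 w)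

lemma pK_le_margWX (hp : ∀ a, 0 ≤ p a) (hK : IsChannel K) (x : 𝒳) (y : 𝒴) (w : 𝒲) :
    p (x, y) * K (x, y) w ≤ margWX p K (w, x) :=
  Finset.single_le_sum (fun y' _ => mul_nonneg (hp _) ((hK _).1 w)) (Finset.mem_univ y)

lemma pK_le_margWY (hp : ∀ a, 0 ≤ p a) (hK : IsChannel K) (x : 𝒳) (y : 𝒴) (w : 𝒲) :
    p (x, y) * K (x, y) w ≤ margWY p K (w, y) :=
  Finset.single_le_sum (f := fun x' => p (x', y) * K (x', y) w)
    (fun x' _ => mul_nonneg (hp _) ((hK _).1 w)) (Finset.mem_univ x)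

lemma sum_margWX (w : 𝒲) : ∑ x, margWX p K (w, x) = outW p K w := by
  simp only [margWX, outW]
  rw [Fintype.sum_prod_type]

lemma sum_margWY (w : 𝒲) : ∑ y, margWY p K (w, y) = outW p K w := by
  simp only [margWY, outW]
  rw [Fintype.sum_prod_type, Finset.sum_comm]

lemma margWX_le_outW (hp : ∀ a, 0 ≤ p a) (hK : IsChannel K) (w : 𝒲) (x : 𝒳) :
    margWX p K (w, x) ≤ outW p K w := by
  rw [← sum_margWX p K w]
  exact Finset.single_le_sum (fun x' _ => margWX_nonneg p K hp hK w x') (Finset.mem_univ x)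

lemma margWY_le_outW (hp : ∀ a, 0 ≤ p a) (hK : IsChannel K) (w : 𝒲) (y : 𝒴) :
    margWY p K (w, y) ≤ outW p K w := by
  rw [← sum_margWY p K w]
  exact Finset.single_le_sum (fun y' _ => margWY_nonneg p K hp hK w y') (Finset.mem_univ y)

/-- `I(W ∧ XY)` as a relative-entropy-style sum. -/
lemma mutInfo_eq (hp : IsProb p) (hK : IsChannel K) :
    mutInfoW p K = ∑ a, ∑ w, p a * K a w * Real.logb 2 (K a w / outW p K w) := by
  have e1 : ent (jointW p K) = -∑ w, ∑ a, p a * K a w * Real.logb 2 (p a * K a w) := by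
    simp only [ent, jointW, Fintype.sum_prod_type]
  have e2 : ent (outW p K) = -∑ w, ∑ a, p a * K a w * Real.logb 2 (outW p K w) := by
    simp only [ent]
    congr 1
    refine Finset.sum_congr rfl fun w _ => ?_
    rw [outW, Finset.sum_mul]
  have e3 : ent p = -∑ w, ∑ a, p a * K a w * Real.logb 2 (p a) := by
    simp only [ent]
    congr 1
    rw [Finset.sum_comm]
    refine Finset.sum_congr rfl fun a _ => ?_
    have : ∑ w, p a * K a w * Real.logb 2 (p a) = (p a * ∑ w, K a w) * Real.logb 2 (p a) := by
      rw [Finset.mul_sum, Finset.sum_mul]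
    rw [this, (hK a).2, mul_one]
  have hterm : ∀ w (a : 𝒳 × 𝒴),
      p a * K a w * Real.logb 2 (p a * K a w) - p a * K a w * Real.logb 2 (outW p K w)
        - p a * K a w * Real.logb 2 (p a)
      = p a * K a w * Real.logb 2 (K a w / outW p K w) := by
    intro w a
    rcases eq_or_ne (p a * K a w) 0 with h0 | hne
    · rw [h0]; ring
    · have hpa : 0 < p a := lt_of_le_of_ne (hp.1 a) fun h => hne (by rw [← h]; ring)
      have hKa : 0 < K a w := lt_of_le_of_ne ((hK a).1 w) fun h => hne (by rw [← h]; ring)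
      have hout : 0 < outW p K w :=
        lt_of_lt_of_le (by positivity) (pK_le_outW p K hp.1 hK a w)
      rw [Real.logb_mul (ne_of_gt hpa) (ne_of_gt hKa),
        Real.logb_div (ne_of_gt hKa) (ne_of_gt hout)]
      ring
  have main : ∑ w, ∑ a, p a * K a w * Real.logb 2 (K a w / outW p K w)
      = (∑ w, ∑ a, p a * K a w * Real.logb 2 (p a * K a w))
        - (∑ w, ∑ a, p a * K a w * Real.logb 2 (outW p K w))
        - (∑ w, ∑ a, p a * K a w * Real.logb 2 (p a)) := by
    rw [← Finset.sum_sub_distrib, ← Finset.sum_sub_distrib]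
    refine Finset.sum_congr rfl fun w _ => ?_
    rw [← Finset.sum_sub_distrib, ← Finset.sum_sub_distrib]
    exact Finset.sum_congr rfl fun a _ => (hterm w a).symm
  have comm : ∑ a, ∑ w, p a * K a w * Real.logb 2 (K a w / outW p K w)
      = ∑ w, ∑ a, p a * K a w * Real.logb 2 (K a w / outW p K w) := Finset.sum_comm
  rw [mutInfoW, e1, e2, e3, comm]
  linarith [main]

end basics

end

end GWAux
namespace GWAux
set_option linter.unusedVariables false
set_option linter.unusedSectionVars false

open Real Finset
open GW

noncomputable section

variable {𝒳 𝒴 𝒲 : Type*} [Fintype 𝒳] [Fintype 𝒴] [Fintype 𝒲]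

section identities

variable (p : 𝒳 × 𝒴 → ℝ) (K : 𝒳 × 𝒴 → 𝒲 → ℝ)

lemma condEntX_eq (hp : IsProb p) (hK : IsChannel K) :
    condEntX p K = ∑ a, ∑ w, p a * K a w * (-Real.logb 2 (condXW p K w a.1)) := by
  have e1 : ent (margWX p K)
      = -∑ w, ∑ x, margWX p K (w, x) * Real.logb 2 (margWX p K (w, x)) := by
    simp only [ent, Fintype.sum_prod_type]
  have e2 : ent (outW p K)
      = -∑ w, ∑ x, margWX p K (w, x) * Real.logb 2 (outW p K w) := by
    simp only [ent]
    congr 1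
    refine Finset.sum_congr rfl fun w _ => ?_
    rw [← sum_margWX p K w, Finset.sum_mul]
  have hterm : ∀ w x,
      margWX p K (w, x) * Real.logb 2 (outW p K w)
        - margWX p K (w, x) * Real.logb 2 (margWX p K (w, x))
      = margWX p K (w, x) * (-Real.logb 2 (condXW p K w x)) := by
    intro w x
    rcases eq_or_ne (margWX p K (w, x)) 0 with h0 | hne
    · rw [h0]; ring
    · have hm : 0 < margWX p K (w, x) := lt_of_le_of_ne (margWX_nonneg p K hp.1 hK w x)
        (Ne.symm hne)
      have hout : 0 < outW p K w := lt_of_lt_of_le hm (margWX_le_outW p K hp.1 hK w x)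
      rw [condXW, Real.logb_div hne (ne_of_gt hout)]
      ring
  have big : condEntX p K = ∑ w, ∑ x, margWX p K (w, x) * (-Real.logb 2 (condXW p K w x)) := by
    rw [condEntX, e1, e2, neg_sub_neg, ← Finset.sum_sub_distrib]
    refine Finset.sum_congr rfl fun w _ => ?_
    rw [← Finset.sum_sub_distrib]
    exact Finset.sum_congr rfl fun x _ => hterm w x
  have expand : ∀ w x, margWX p K (w, x) * (-Real.logb 2 (condXW p K w x))
      = ∑ y, p (x, y) * K (x, y) w * (-Real.logb 2 (condXW p K w x)) := by
    intro w x
    rw [margWX, Finset.sum_mul]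
  rw [big, Fintype.sum_prod_type,
    Finset.sum_congr rfl (fun w (_ : w ∈ univ) => Finset.sum_congr rfl
      (fun x (_ : x ∈ univ) => expand w x)), Finset.sum_comm]
  exact Finset.sum_congr rfl fun x _ => Finset.sum_comm

lemma condEntY_eq (hp : IsProb p) (hK : IsChannel K) :
    condEntY p K = ∑ a, ∑ w, p a * K a w * (-Real.logb 2 (condYW p K w a.2)) := by
  have e1 : ent (margWY p K)
      = -∑ w, ∑ y, margWY p K (w, y) * Real.logb 2 (margWY p K (w, y)) := by
    simp only [ent, Fintype.sum_prod_type]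
  have e2 : ent (outW p K)
      = -∑ w, ∑ y, margWY p K (w, y) * Real.logb 2 (outW p K w) := by
    simp only [ent]
    congr 1
    refine Finset.sum_congr rfl fun w _ => ?_
    rw [← sum_margWY p K w, Finset.sum_mul]
  have hterm : ∀ w y,
      margWY p K (w, y) * Real.logb 2 (outW p K w)
        - margWY p K (w, y) * Real.logb 2 (margWY p K (w, y))
      = margWY p K (w, y) * (-Real.logb 2 (condYW p K w y)) := by
    intro w y
    rcases eq_or_ne (margWY p K (w, y)) 0 with h0 | hne
    · rw [h0]; ring
    · have hm : 0 < margWY p K (w, y) := lt_of_le_of_ne (margWY_nonneg p K hp.1 hK w y)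
        (Ne.symm hne)
      have hout : 0 < outW p K w := lt_of_lt_of_le hm (margWY_le_outW p K hp.1 hK w y)
      rw [condYW, Real.logb_div hne (ne_of_gt hout)]
      ring
  have big : condEntY p K = ∑ w, ∑ y, margWY p K (w, y) * (-Real.logb 2 (condYW p K w y)) := by
    rw [condEntY, e1, e2, neg_sub_neg, ← Finset.sum_sub_distrib]
    refine Finset.sum_congr rfl fun w _ => ?_
    rw [← Finset.sum_sub_distrib]
    exact Finset.sum_congr rfl fun y _ => hterm w y
  have expand : ∀ w y, margWY p K (w, y) * (-Real.logb 2 (condYW p K w y))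
      = ∑ x, p (x, y) * K (x, y) w * (-Real.logb 2 (condYW p K w y)) := by
    intro w y
    rw [margWY, Finset.sum_mul]
  have swap : ∑ a : 𝒳 × 𝒴, ∑ w, p a * K a w * (-Real.logb 2 (condYW p K w a.2))
      = ∑ y, ∑ x, ∑ w, p (x, y) * K (x, y) w * (-Real.logb 2 (condYW p K w y)) := by
    rw [Fintype.sum_prod_type, Finset.sum_comm]
  rw [big, swap,
    Finset.sum_congr rfl (fun w (_ : w ∈ univ) => Finset.sum_congr rfl
      (fun y (_ : y ∈ univ) => expand w y)), Finset.sum_comm]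
  exact Finset.sum_congr rfl fun y _ => Finset.sum_comm

lemma mutInfo_nonneg (hp : IsProb p) (hK : IsChannel K) : 0 ≤ mutInfoW p K := by
  rw [mutInfo_eq p K hp hK]
  have hg := gibbs (α := (𝒳 × 𝒴) × 𝒲) (fun z => p z.1 * K z.1 z.2)
    (fun z => p z.1 * outW p K z.2)
    (fun z => mul_nonneg (hp.1 z.1) ((hK z.1).1 z.2))
    (by
      rw [Fintype.sum_prod_type]
      calc ∑ a, ∑ w, p a * K a w = ∑ a : 𝒳 × 𝒴, p a := by
            refine Finset.sum_congr rfl fun a _ => ?_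
            rw [← Finset.mul_sum, (hK a).2, mul_one]
      _ = 1 := hp.2)
    (by
      rw [Fintype.sum_prod_type]
      calc ∑ a, ∑ w, p a * outW p K w = ∑ a : 𝒳 × 𝒴, p a := by
            refine Finset.sum_congr rfl fun a _ => ?_
            rw [← Finset.mul_sum, sum_outW p K hp hK, mul_one]
      _ ≤ 1 := le_of_eq hp.2)
    (fun z => mul_nonneg (hp.1 z.1) (outW_nonneg p K hp.1 hK z.2))
    (by
      intro z hz
      rcases mul_eq_zero.1 hz with h | h
      · show p z.1 * K z.1 z.2 = 0
        rw [h, zero_mul]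
      · show p z.1 * K z.1 z.2 = 0
        have h1 := pK_le_outW p K hp.1 hK z.1 z.2
        have h2 := mul_nonneg (hp.1 z.1) ((hK z.1).1 z.2)
        rw [h] at h1
        linarith)
  have eq1 : ∑ z : (𝒳 × 𝒴) × 𝒲, p z.1 * K z.1 z.2
      * Real.logb 2 (p z.1 * K z.1 z.2 / (p z.1 * outW p K z.2))
      = ∑ a, ∑ w, p a * K a w * Real.logb 2 (K a w / outW p K w) := by
    rw [Fintype.sum_prod_type]
    refine Finset.sum_congr rfl fun a _ => Finset.sum_congr rfl fun w _ => ?_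
    rcases eq_or_ne (p a) 0 with h0 | hne
    · rw [h0]; ring
    · rw [mul_div_mul_left _ _ hne]
  rw [← eq1]
  exact hg

lemma condEntX_nonneg (hp : IsProb p) (hK : IsChannel K) : 0 ≤ condEntX p K := by
  rw [condEntX_eq p K hp hK]
  refine Finset.sum_nonneg fun a _ => Finset.sum_nonneg fun w _ => ?_
  rcases eq_or_ne (p a * K a w) 0 with h0 | hne
  · rw [h0, zero_mul]
  · have hpK : 0 < p a * K a w :=
      lt_of_le_of_ne (mul_nonneg (hp.1 a) ((hK a).1 w)) (Ne.symm hne)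
    have hm : 0 < margWX p K (w, a.1) :=
      lt_of_lt_of_le hpK (by
        have := pK_le_margWX p K hp.1 hK a.1 a.2 w
        simpa using this)
    have hout : 0 < outW p K w := lt_of_lt_of_le hm (margWX_le_outW p K hp.1 hK w a.1)
    have hc1 : condXW p K w a.1 ≤ 1 := by
      rw [condXW, div_le_one hout]
      exact margWX_le_outW p K hp.1 hK w a.1
    have hc0 : 0 < condXW p K w a.1 := div_pos hm hout
    have : Real.logb 2 (condXW p K w a.1) ≤ 0 :=
      Real.logb_nonpos (by norm_num) (le_of_lt hc0) hc1
    have := mul_nonneg (le_of_lt hpK) (neg_nonneg.2 this)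
    linarith [this]

lemma condEntY_nonneg (hp : IsProb p) (hK : IsChannel K) : 0 ≤ condEntY p K := by
  rw [condEntY_eq p K hp hK]
  refine Finset.sum_nonneg fun a _ => Finset.sum_nonneg fun w _ => ?_
  rcases eq_or_ne (p a * K a w) 0 with h0 | hne
  · rw [h0, zero_mul]
  · have hpK : 0 < p a * K a w :=
      lt_of_le_of_ne (mul_nonneg (hp.1 a) ((hK a).1 w)) (Ne.symm hne)
    have hm : 0 < margWY p K (w, a.2) :=
      lt_of_lt_of_le hpK (by
        have := pK_le_margWY p K hp.1 hK a.1 a.2 w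
        simpa using this)
    have hout : 0 < outW p K w := lt_of_lt_of_le hm (margWY_le_outW p K hp.1 hK w a.2)
    have hc1 : condYW p K w a.2 ≤ 1 := by
      rw [condYW, div_le_one hout]
      exact margWY_le_outW p K hp.1 hK w a.2
    have hc0 : 0 < condYW p K w a.2 := div_pos hm hout
    have : Real.logb 2 (condYW p K w a.2) ≤ 0 :=
      Real.logb_nonpos (by norm_num) (le_of_lt hc0) hc1
    have := mul_nonneg (le_of_lt hpK) (neg_nonneg.2 this)
    linarith [this]

end identities

end

end GWAux
namespace GWAux
set_option linter.unusedVariables false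
set_option linter.unusedSectionVars false

open Real Finset Filter
open GW

noncomputable section

variable {𝒳 𝒴 : Type*} [Fintype 𝒳] [Fintype 𝒴]

/-- The constraint set in the definition of `Rgw`. -/
def rset (p : 𝒳 × 𝒴 → ℝ) (r1 r2 : ℝ) : Set ℝ :=
  { ρ : ℝ | ∃ k, k ≤ Fintype.card 𝒳 * Fintype.card 𝒴 + 2 ∧
    ∃ K : 𝒳 × 𝒴 → Fin k → ℝ, IsChannel K ∧
      condEntX p K ≤ r1 ∧ condEntY p K ≤ r2 ∧ ρ = mutInfoW p K }

lemma Rgw_eq_sInf (p : 𝒳 × 𝒴 → ℝ) (r1 r2 : ℝ) : Rgw p r1 r2 = sInf (rset p r1 r2) := rfl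

lemma rset_nonneg {p : 𝒳 × 𝒴 → ℝ} (hp : IsProb p) {r1 r2 : ℝ} :
    ∀ ρ ∈ rset p r1 r2, 0 ≤ ρ := by
  rintro ρ ⟨k, hk, K, hch, h1, h2, rfl⟩
  exact mutInfo_nonneg p K hp hch

lemma bddBelow_rset {p : 𝒳 × 𝒴 → ℝ} (hp : IsProb p) {r1 r2 : ℝ} :
    BddBelow (rset p r1 r2) :=
  ⟨0, fun ρ h => rset_nonneg hp ρ h⟩

lemma Rgw_le_of_mem {p : 𝒳 × 𝒴 → ℝ} (hp : IsProb p) {r1 r2 ρ : ℝ}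
    (h : ρ ∈ rset p r1 r2) : Rgw p r1 r2 ≤ ρ :=
  csInf_le (bddBelow_rset hp) h

lemma rset_mono {p : 𝒳 × 𝒴 → ℝ} {r1 r2 r1' r2' : ℝ} (h1 : r1 ≤ r1') (h2 : r2 ≤ r2') :
    rset p r1 r2 ⊆ rset p r1' r2' := by
  rintro ρ ⟨k, hk, K, hch, hc1, hc2, rfl⟩
  exact ⟨k, hk, K, hch, le_trans hc1 h1, le_trans hc2 h2, rfl⟩

lemma Rgw_mono {p : 𝒳 × 𝒴 → ℝ} (hp : IsProb p) {r1 r2 r1' r2' : ℝ}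
    (h1 : r1 ≤ r1') (h2 : r2 ≤ r2') (hne : (rset p r1 r2).Nonempty) :
    Rgw p r1' r2' ≤ Rgw p r1 r2 :=
  csInf_le_csInf (bddBelow_rset hp) hne (rset_mono h1 h2)

/-- The identity (deterministic) test channel. -/
def idChan (𝒳 𝒴 : Type*) [Fintype 𝒳] [Fintype 𝒴] :
    𝒳 × 𝒴 → Fin (Fintype.card (𝒳 × 𝒴)) → ℝ :=
  fun a i => if Fintype.equivFin (𝒳 × 𝒴) a = i then 1 else 0

lemma idChan_isChannel : IsChannel (idChan 𝒳 𝒴) := by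
  intro a
  constructor
  · intro i
    unfold idChan
    split <;> norm_num
  · unfold idChan
    rw [Finset.sum_ite_eq Finset.univ (Fintype.equivFin (𝒳 × 𝒴) a) (fun _ => (1:ℝ))]
    simp

lemma outW_idChan (p : 𝒳 × 𝒴 → ℝ) (a : 𝒳 × 𝒴) :
    outW p (idChan 𝒳 𝒴) (Fintype.equivFin (𝒳 × 𝒴) a) = p a := by
  unfold outW idChan
  rw [Finset.sum_eq_single a]
  · simp
  · intro a' _ hne
    have : Fintype.equivFin (𝒳 × 𝒴) a' ≠ Fintype.equivFin (𝒳 × 𝒴) a :=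
      fun h => hne ((Fintype.equivFin (𝒳 × 𝒴)).injective h)
    simp [this]
  · intro h
    exact absurd (Finset.mem_univ a) h

lemma margWX_idChan (p : 𝒳 × 𝒴 → ℝ) (a : 𝒳 × 𝒴) :
    margWX p (idChan 𝒳 𝒴) (Fintype.equivFin (𝒳 × 𝒴) a, a.1) = p a := by
  unfold margWX idChan
  rw [Finset.sum_eq_single a.2]
  · simp
  · intro y _ hne
    have : (a.1, y) ≠ a := fun h => hne (by rw [← h])
    have : Fintype.equivFin (𝒳 × 𝒴) (a.1, y) ≠ Fintype.equivFin (𝒳 × 𝒴) a :=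
      fun h => this ((Fintype.equivFin (𝒳 × 𝒴)).injective h)
    simp [this]
  · intro h
    exact absurd (Finset.mem_univ a.2) h

lemma margWY_idChan (p : 𝒳 × 𝒴 → ℝ) (a : 𝒳 × 𝒴) :
    margWY p (idChan 𝒳 𝒴) (Fintype.equivFin (𝒳 × 𝒴) a, a.2) = p a := by
  unfold margWY idChan
  rw [Finset.sum_eq_single a.1]
  · simp
  · intro x _ hne
    have : (x, a.2) ≠ a := fun h => hne (by rw [← h])
    have : Fintype.equivFin (𝒳 × 𝒴) (x, a.2) ≠ Fintype.equivFin (𝒳 × 𝒴) a :=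
      fun h => this ((Fintype.equivFin (𝒳 × 𝒴)).injective h)
    simp [this]
  · intro h
    exact absurd (Finset.mem_univ a.1) h

lemma condEntX_idChan (p : 𝒳 × 𝒴 → ℝ) (hp : IsProb p) :
    condEntX p (idChan 𝒳 𝒴) = 0 := by
  rw [condEntX_eq p _ hp idChan_isChannel]
  refine Finset.sum_eq_zero fun a _ => Finset.sum_eq_zero fun w _ => ?_
  rcases eq_or_ne (p a) 0 with hp0 | hpne
  · rw [hp0]; ring
  rcases eq_or_ne (idChan 𝒳 𝒴 a w) 0 with hK0 | hKne
  · rw [hK0]; ring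
  have hw : w = Fintype.equivFin (𝒳 × 𝒴) a := by
    by_contra h
    exact hKne (by unfold idChan; simp [Ne.symm h])
  subst hw
  have : condXW p (idChan 𝒳 𝒴) (Fintype.equivFin (𝒳 × 𝒴) a) a.1 = 1 := by
    rw [condXW, margWX_idChan, outW_idChan, div_self hpne]
  rw [this]
  simp

lemma condEntY_idChan (p : 𝒳 × 𝒴 → ℝ) (hp : IsProb p) :
    condEntY p (idChan 𝒳 𝒴) = 0 := by
  rw [condEntY_eq p _ hp idChan_isChannel]
  refine Finset.sum_eq_zero fun a _ => Finset.sum_eq_zero fun w _ => ?_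
  rcases eq_or_ne (p a) 0 with hp0 | hpne
  · rw [hp0]; ring
  rcases eq_or_ne (idChan 𝒳 𝒴 a w) 0 with hK0 | hKne
  · rw [hK0]; ring
  have hw : w = Fintype.equivFin (𝒳 × 𝒴) a := by
    by_contra h
    exact hKne (by unfold idChan; simp [Ne.symm h])
  subst hw
  have : condYW p (idChan 𝒳 𝒴) (Fintype.equivFin (𝒳 × 𝒴) a) a.2 = 1 := by
    rw [condYW, margWY_idChan, outW_idChan, div_self hpne]
  rw [this]
  simp

lemma rset_nonempty {p : 𝒳 × 𝒴 → ℝ} (hp : IsProb p) {r1 r2 : ℝ}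
    (h1 : 0 ≤ r1) (h2 : 0 ≤ r2) : (rset p r1 r2).Nonempty := by
  refine ⟨mutInfoW p (idChan 𝒳 𝒴), Fintype.card (𝒳 × 𝒴), ?_, idChan 𝒳 𝒴,
    idChan_isChannel, ?_, ?_, rfl⟩
  · rw [Fintype.card_prod]; omega
  · rw [condEntX_idChan p hp]; exact h1
  · rw [condEntY_idChan p hp]; exact h2

/-- The first constraint is active at the optimum. -/
lemma active1 {p : 𝒳 × 𝒴 → ℝ} (hp : IsProb p) {r1s r2s lam1 : ℝ}
    (hd1 : HasDerivAt (fun r => Rgw p r r2s) (-lam1) r1s) (hl1 : 0 < lam1)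
    {k : ℕ} {K : 𝒳 × 𝒴 → Fin k → ℝ} (hK : IsOptChannel p r1s r2s K) :
    condEntX p K = r1s := by
  obtain ⟨hkcard, hch, hle1, hle2, hopt⟩ := hK
  by_contra hne
  have hlt : condEntX p K < r1s := lt_of_le_of_ne hle1 hne
  set h1 := condEntX p K with hh1
  have hmemr : ∀ r, h1 ≤ r → mutInfoW p K ∈ rset p r r2s := fun r hr =>
    ⟨k, hkcard, K, hch, hr, hle2, rfl⟩
  have hconst : ∀ r, h1 ≤ r → r ≤ r1s → Rgw p r r2s = Rgw p r1s r2s := by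
    intro r hr hr'
    apply le_antisymm
    · rw [← hopt]
      exact Rgw_le_of_mem hp (hmemr r hr)
    · exact Rgw_mono hp hr' (le_refl r2s) ⟨mutInfoW p K, hmemr r hr⟩
  have hslope : ∀ᶠ y in nhdsWithin r1s (Set.Iio r1s),
      slope (fun r => Rgw p r r2s) r1s y = 0 := by
    filter_upwards [Ioo_mem_nhdsLT_of_mem (Set.mem_Ioc.2 ⟨hlt, le_refl r1s⟩)] with y hy
    rw [slope_def_field]
    rw [hconst y (le_of_lt hy.1) (le_of_lt hy.2)]
    simp
  have ht1 : Tendsto (slope (fun r => Rgw p r r2s) r1s) (nhdsWithin r1s (Set.Iio r1s))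
      (nhds (-lam1)) := by
    refine (hasDerivAt_iff_tendsto_slope.1 hd1).mono_left (nhdsWithin_mono r1s ?_)
    intro y hy
    exact fun h => absurd h (ne_of_lt hy)
  have ht2 : Tendsto (slope (fun r => Rgw p r r2s) r1s) (nhdsWithin r1s (Set.Iio r1s))
      (nhds 0) := Tendsto.congr' (Filter.EventuallyEq.symm hslope) tendsto_const_nhds
  have : -lam1 = 0 := tendsto_nhds_unique ht1 ht2
  linarith

/-- The second constraint is active at the optimum. -/
lemma active2 {p : 𝒳 × 𝒴 → ℝ} (hp : IsProb p) {r1s r2s lam2 : ℝ}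
    (hd2 : HasDerivAt (fun r => Rgw p r1s r) (-lam2) r2s) (hl2 : 0 < lam2)
    {k : ℕ} {K : 𝒳 × 𝒴 → Fin k → ℝ} (hK : IsOptChannel p r1s r2s K) :
    condEntY p K = r2s := by
  obtain ⟨hkcard, hch, hle1, hle2, hopt⟩ := hK
  by_contra hne
  have hlt : condEntY p K < r2s := lt_of_le_of_ne hle2 hne
  set h2 := condEntY p K with hh2
  have hmemr : ∀ r, h2 ≤ r → mutInfoW p K ∈ rset p r1s r := fun r hr =>
    ⟨k, hkcard, K, hch, hle1, hr, rfl⟩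
  have hconst : ∀ r, h2 ≤ r → r ≤ r2s → Rgw p r1s r = Rgw p r1s r2s := by
    intro r hr hr'
    apply le_antisymm
    · rw [← hopt]
      exact Rgw_le_of_mem hp (hmemr r hr)
    · exact Rgw_mono hp (le_refl r1s) hr' ⟨mutInfoW p K, hmemr r hr⟩
  have hslope : ∀ᶠ y in nhdsWithin r2s (Set.Iio r2s),
      slope (fun r => Rgw p r1s r) r2s y = 0 := by
    filter_upwards [Ioo_mem_nhdsLT_of_mem (Set.mem_Ioc.2 ⟨hlt, le_refl r2s⟩)] with y hy
    rw [slope_def_field]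
    rw [hconst y (le_of_lt hy.1) (le_of_lt hy.2)]
    simp
  have ht1 : Tendsto (slope (fun r => Rgw p r1s r) r2s) (nhdsWithin r2s (Set.Iio r2s))
      (nhds (-lam2)) := by
    refine (hasDerivAt_iff_tendsto_slope.1 hd2).mono_left (nhdsWithin_mono r2s ?_)
    intro y hy
    exact fun h => absurd h (ne_of_lt hy)
  have ht2 : Tendsto (slope (fun r => Rgw p r1s r) r2s) (nhdsWithin r2s (Set.Iio r2s))
      (nhds 0) := Tendsto.congr' (Filter.EventuallyEq.symm hslope) tendsto_const_nhds
  have : -lam2 = 0 := tendsto_nhds_unique ht1 ht2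
  linarith

end

end GWAux
namespace GWAux
set_option linter.unusedVariables false
set_option linter.unusedSectionVars false

open Real Finset
open GW

noncomputable section

variable {𝒳 𝒴 𝒲 : Type*} [Fintype 𝒳] [Fintype 𝒴] [Fintype 𝒲]

section decomp

variable (p : 𝒳 × 𝒴 → ℝ) (K : 𝒳 × 𝒴 → 𝒲 → ℝ)

/-- Conditional distribution of the source given `W = w`. -/
def dq (w : 𝒲) (a : 𝒳 × 𝒴) : ℝ := p a * K a w / outW p K w

lemma dq_nonneg (hp : IsProb p) (hK : IsChannel K) (w : 𝒲) (a : 𝒳 × 𝒴) :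
    0 ≤ dq p K w a :=
  div_nonneg (mul_nonneg (hp.1 a) ((hK a).1 w)) (outW_nonneg p K hp.1 hK w)

lemma dq_row (hp : IsProb p) (hK : IsChannel K) (w : 𝒲) (h : outW p K w ≠ 0) :
    ∑ a, dq p K w a = 1 := by
  unfold dq
  rw [← Finset.sum_div]
  rw [div_eq_one_iff_eq h]
  rfl

lemma mul_dq (hp : IsProb p) (hK : IsChannel K) (w : 𝒲) (a : 𝒳 × 𝒴) :
    outW p K w * dq p K w a = p a * K a w := by
  rcases eq_or_ne (outW p K w) 0 with h0 | hne
  · have h1 := pK_le_outW p K hp.1 hK a w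
    have h2 := mul_nonneg (hp.1 a) ((hK a).1 w)
    rw [h0] at h1
    rw [h0, zero_mul]
    linarith
  · rw [dq, mul_div_cancel₀ _ hne]

lemma dq_marg (hp : IsProb p) (hK : IsChannel K) (a : 𝒳 × 𝒴) :
    ∑ w, outW p K w * dq p K w a = p a := by
  rw [Finset.sum_congr rfl fun w _ => mul_dq p K hp hK w a, ← Finset.mul_sum, (hK a).2,
    mul_one]

lemma mutInfo_decomp (hp : IsProb p) (hK : IsChannel K) :
    mutInfoW p K = ent p - ∑ w, outW p K w * ent (dq p K w) := by
  have hjoint : jointW p K = fun z : 𝒲 × (𝒳 × 𝒴) => outW p K z.1 * dq p K z.1 z.2 := by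
    funext z
    rw [jointW, mul_dq p K hp hK z.1 z.2]
  have := ent_decomp (outW p K) (dq p K) (outW_nonneg p K hp.1 hK)
    (dq_nonneg p K hp hK) (dq_row p K hp hK)
  rw [mutInfoW, hjoint, this]
  ring

/-- X-marginal of the conditional distribution. -/
def dqX (w : 𝒲) (x : 𝒳) : ℝ := ∑ y, dq p K w (x, y)

/-- Y-marginal of the conditional distribution. -/
def dqY (w : 𝒲) (y : 𝒴) : ℝ := ∑ x, dq p K w (x, y)

lemma dqX_nonneg (hp : IsProb p) (hK : IsChannel K) (w : 𝒲) (x : 𝒳) :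
    0 ≤ dqX p K w x := Finset.sum_nonneg fun y _ => dq_nonneg p K hp hK w (x, y)

lemma dqY_nonneg (hp : IsProb p) (hK : IsChannel K) (w : 𝒲) (y : 𝒴) :
    0 ≤ dqY p K w y := Finset.sum_nonneg fun x _ => dq_nonneg p K hp hK w (x, y)

lemma dqX_row (hp : IsProb p) (hK : IsChannel K) (w : 𝒲) (h : outW p K w ≠ 0) :
    ∑ x, dqX p K w x = 1 := by
  unfold dqX
  rw [← Fintype.sum_prod_type]
  exact dq_row p K hp hK w h

lemma dqY_row (hp : IsProb p) (hK : IsChannel K) (w : 𝒲) (h : outW p K w ≠ 0) :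
    ∑ y, dqY p K w y = 1 := by
  unfold dqY
  rw [Finset.sum_comm, ← Fintype.sum_prod_type]
  exact dq_row p K hp hK w h

lemma margWX_decomp (hp : IsProb p) (hK : IsChannel K) (w : 𝒲) (x : 𝒳) :
    margWX p K (w, x) = outW p K w * dqX p K w x := by
  rw [dqX, Finset.mul_sum, margWX]
  exact Finset.sum_congr rfl fun y _ => (mul_dq p K hp hK w (x, y)).symm

lemma margWY_decomp (hp : IsProb p) (hK : IsChannel K) (w : 𝒲) (y : 𝒴) :
    margWY p K (w, y) = outW p K w * dqY p K w y := by
  rw [dqY, Finset.mul_sum, margWY]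
  exact Finset.sum_congr rfl fun x _ => (mul_dq p K hp hK w (x, y)).symm

lemma condEntX_decomp (hp : IsProb p) (hK : IsChannel K) :
    condEntX p K = ∑ w, outW p K w * ent (dqX p K w) := by
  have hm : margWX p K = fun z : 𝒲 × 𝒳 => outW p K z.1 * dqX p K z.1 z.2 := by
    funext z
    exact margWX_decomp p K hp hK z.1 z.2
  have := ent_decomp (outW p K) (dqX p K) (outW_nonneg p K hp.1 hK)
    (dqX_nonneg p K hp hK) (dqX_row p K hp hK)
  rw [condEntX, hm, this]
  ring

lemma condEntY_decomp (hp : IsProb p) (hK : IsChannel K) :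
    condEntY p K = ∑ w, outW p K w * ent (dqY p K w) := by
  have hm : margWY p K = fun z : 𝒲 × 𝒴 => outW p K z.1 * dqY p K z.1 z.2 := by
    funext z
    exact margWY_decomp p K hp hK z.1 z.2
  have := ent_decomp (outW p K) (dqY p K) (outW_nonneg p K hp.1 hK)
    (dqY_nonneg p K hp hK) (dqY_row p K hp hK)
  rw [condEntY, hm, this]
  ring

end decomp

section build

variable {p : 𝒳 × 𝒴 → ℝ}

lemma sum_emb {m : ℕ} (s : Finset (Fin m)) (E : Fin s.card ≃ {w // w ∈ s}) (f : Fin m → ℝ)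
    (hf : ∀ w ∉ s, f w = 0) : ∑ i, f (E i) = ∑ w, f w := by
  rw [Equiv.sum_comp E (fun w : {w // w ∈ s} => f ↑w), Finset.sum_coe_sort s f]
  exact Finset.sum_subset (Finset.subset_univ s) (fun w _ hw => hf w hw)

/-- From a weight/conditional decomposition, build a channel whose alphabet size is the
size of the support of the weights, with the corresponding information quantities. -/
lemma exists_small_channel (hp : IsProb p) {m : ℕ} (μ : Fin m → ℝ) (q : Fin m → 𝒳 × 𝒴 → ℝ)
    (hμ0 : ∀ w, 0 ≤ μ w) (hq0 : ∀ w a, 0 ≤ q w a)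
    (hq1 : ∀ w, μ w ≠ 0 → ∑ a, q w a = 1)
    (hmarg : ∀ a, ∑ w, μ w * q w a = p a) :
    ∃ (k' : ℕ) (K' : 𝒳 × 𝒴 → Fin k' → ℝ),
      k' = (Finset.univ.filter (fun w => μ w ≠ 0)).card ∧ IsChannel K' ∧
      mutInfoW p K' = ent p - ∑ w, μ w * ent (q w) ∧
      condEntX p K' = ∑ w, μ w * ent (fun x => ∑ y, q w (x, y)) ∧
      condEntY p K' = ∑ w, μ w * ent (fun y => ∑ x, q w (x, y)) := by
  classical
  set s : Finset (Fin m) := Finset.univ.filter (fun w => μ w ≠ 0) with hs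
  have hzero : ∀ w a, p a = 0 → μ w * q w a = 0 := by
    intro w a hpa
    have hle : μ w * q w a ≤ p a := by
      rw [← hmarg a]
      exact Finset.single_le_sum (f := fun w' => μ w' * q w' a)
        (fun w' _ => mul_nonneg (hμ0 w') (hq0 w' a)) (Finset.mem_univ w)
    have := mul_nonneg (hμ0 w) (hq0 w a)
    linarith [hle.trans_eq hpa]
  have hcardpos : 0 < s.card := by
    rcases Finset.exists_ne_zero_of_sum_ne_zero (by rw [hp.2]; norm_num :
        ∑ a : 𝒳 × 𝒴, p a ≠ 0) with ⟨a, _, hpa⟩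
    rcases Finset.exists_ne_zero_of_sum_ne_zero (by rw [hmarg a]; exact hpa :
        ∑ w, μ w * q w a ≠ 0) with ⟨w, _, hw⟩
    refine Finset.card_pos.2 ⟨w, ?_⟩
    simp only [hs, Finset.mem_filter, Finset.mem_univ, true_and]
    exact fun h => hw (by rw [h, zero_mul])
  let E : Fin s.card ≃ {w // w ∈ s} :=
    (finCongr (Fintype.card_coe s).symm).trans (Fintype.equivFin {w // w ∈ s}).symm
  have hEmem : ∀ i, (E i : Fin m) ∈ s := fun i => (E i).2
  have hEne : ∀ i, μ (E i) ≠ 0 := by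
    intro i
    have := hEmem i
    simp only [hs, Finset.mem_filter] at this
    exact this.2
  let K' : 𝒳 × 𝒴 → Fin s.card → ℝ := fun a i =>
    if p a = 0 then (1 : ℝ) / s.card else μ (E i) * q (E i) a / p a
  have hpb : ∀ a i, p a * K' a i = μ (E i) * q (E i) a := by
    intro a i
    by_cases hpa : p a = 0
    · simp only [K', if_pos hpa, hpa, zero_mul]
      exact (hzero _ _ hpa).symm
    · simp only [K', if_neg hpa]
      field_simp
  have hch : IsChannel K' := by
    intro a
    constructor
    · intro i
      by_cases hpa : p a = 0
      · simp only [K', if_pos hpa]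
        positivity
      · simp only [K', if_neg hpa]
        have hppos : 0 < p a := lt_of_le_of_ne (hp.1 a) (Ne.symm hpa)
        exact div_nonneg (mul_nonneg (hμ0 _) (hq0 _ a)) (le_of_lt hppos)
    · by_cases hpa : p a = 0
      · simp only [K', if_pos hpa, Finset.sum_const, Finset.card_univ, Fintype.card_fin,
          nsmul_eq_mul]
        rw [mul_one_div, div_self]
        exact Nat.cast_ne_zero.2 (Nat.pos_iff_ne_zero.1 hcardpos)
      · simp only [K', if_neg hpa]
        rw [← Finset.sum_div]
        rw [sum_emb s E (fun w => μ w * q w a) (by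
          intro w hw
          have : μ w = 0 := by
            by_contra h
            exact hw (by simp [hs, h])
          show μ w * q w a = 0
          rw [this, zero_mul])]
        rw [hmarg a, div_self hpa]
  have hout : ∀ i, outW p K' i = μ (E i) := by
    intro i
    rw [outW, Finset.sum_congr rfl fun a _ => hpb a i, ← Finset.mul_sum, hq1 _ (hEne i),
      mul_one]
  have hjoint : jointW p K' = fun z : Fin s.card × (𝒳 × 𝒴) => μ (E z.1) * q (E z.1) z.2 := by
    funext z
    rw [jointW, hpb z.2 z.1]
  have hentout : ent (outW p K') = ent (fun i => μ (E i)) := by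
    unfold ent
    congr 1
    exact Finset.sum_congr rfl fun i _ => by rw [hout i]
  refine ⟨s.card, K', rfl, hch, ?_, ?_, ?_⟩
  · -- mutInfo
    rw [mutInfoW, hjoint, ent_decomp (fun i => μ (E i)) (fun i => q (E i))
      (fun i => hμ0 _) (fun i a => hq0 _ a) (fun i _ => hq1 _ (hEne i)), hentout]
    have : ∑ i, μ (E i) * ent (q (E i)) = ∑ w, μ w * ent (q w) := by
      apply sum_emb s E (fun w => μ w * ent (q w))
      intro w hw
      have : μ w = 0 := by
        by_contra h
        exact hw (by simp [hs, h])
      rw [this, zero_mul]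
    rw [this]
    ring
  · -- condEntX
    have hm : margWX p K' = fun z : Fin s.card × 𝒳 =>
        μ (E z.1) * ∑ y, q (E z.1) (z.2, y) := by
      funext z
      rw [margWX, Finset.mul_sum]
      exact Finset.sum_congr rfl fun y _ => hpb (z.2, y) z.1
    rw [condEntX, hm, ent_decomp (fun i => μ (E i)) (fun i x => ∑ y, q (E i) (x, y))
      (fun i => hμ0 _) (fun i x => Finset.sum_nonneg fun y _ => hq0 _ _)
      (fun i hne => by rw [← Fintype.sum_prod_type]; exact hq1 _ (hEne i)), hentout]
    have : ∑ i, μ (E i) * ent (fun x => ∑ y, q (E i) (x, y))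
        = ∑ w, μ w * ent (fun x => ∑ y, q w (x, y)) := by
      apply sum_emb s E (fun w => μ w * ent (fun x => ∑ y, q w (x, y)))
      intro w hw
      have : μ w = 0 := by
        by_contra h
        exact hw (by simp [hs, h])
      rw [this, zero_mul]
    rw [this]
    ring
  · -- condEntY
    have hm : margWY p K' = fun z : Fin s.card × 𝒴 =>
        μ (E z.1) * ∑ x, q (E z.1) (x, z.2) := by
      funext z
      rw [margWY, Finset.mul_sum]
      exact Finset.sum_congr rfl fun x _ => hpb (x, z.2) z.1
    rw [condEntY, hm, ent_decomp (fun i => μ (E i)) (fun i y => ∑ x, q (E i) (x, y))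
      (fun i => hμ0 _) (fun i y => Finset.sum_nonneg fun x _ => hq0 _ _)
      (fun i hne => by
        rw [Finset.sum_comm, ← Fintype.sum_prod_type]
        exact hq1 _ (hEne i)), hentout]
    have : ∑ i, μ (E i) * ent (fun y => ∑ x, q (E i) (x, y))
        = ∑ w, μ w * ent (fun y => ∑ x, q w (x, y)) := by
      apply sum_emb s E (fun w => μ w * ent (fun y => ∑ x, q w (x, y)))
      intro w hw
      have : μ w = 0 := by
        by_contra h
        exact hw (by simp [hs, h])
      rw [this, zero_mul]
    rw [this]
    ring

end build

end

end GWAux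
namespace GWAux
set_option linter.unusedVariables false
set_option linter.unusedSectionVars false

open Real Finset
open GW

noncomputable section

variable {𝒳 𝒴 : Type*} [Fintype 𝒳] [Fintype 𝒴]

/-- Support reduction: keep the mixture constraints and do not decrease the objective,
using at most `|𝒳||𝒴| + 2` atoms. -/
lemma reduce_support {m : ℕ} (q : Fin m → 𝒳 × 𝒴 → ℝ) (g1 g2 c : Fin m → ℝ) :
    ∀ (μ : Fin m → ℝ), (∀ w, 0 ≤ μ w) → (∀ w, μ w ≠ 0 → ∑ a, q w a = 1) →
    ∃ μ' : Fin m → ℝ, (∀ w, 0 ≤ μ' w) ∧ (∀ w, μ' w ≠ 0 → μ w ≠ 0) ∧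
      (Finset.univ.filter (fun w => μ' w ≠ 0)).card ≤ Fintype.card 𝒳 * Fintype.card 𝒴 + 2 ∧
      (∀ a, ∑ w, μ' w * q w a = ∑ w, μ w * q w a) ∧
      (∑ w, μ' w * g1 w = ∑ w, μ w * g1 w) ∧
      (∑ w, μ' w * g2 w = ∑ w, μ w * g2 w) ∧
      ∑ w, μ w * c w ≤ ∑ w, μ' w * c w := by
  classical
  suffices H : ∀ (n : ℕ) (μ : Fin m → ℝ),
      (Finset.univ.filter (fun w => μ w ≠ 0)).card ≤ n →
      (∀ w, 0 ≤ μ w) → (∀ w, μ w ≠ 0 → ∑ a, q w a = 1) →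
      ∃ μ' : Fin m → ℝ, (∀ w, 0 ≤ μ' w) ∧ (∀ w, μ' w ≠ 0 → μ w ≠ 0) ∧
        (Finset.univ.filter (fun w => μ' w ≠ 0)).card ≤ Fintype.card 𝒳 * Fintype.card 𝒴 + 2 ∧
        (∀ a, ∑ w, μ' w * q w a = ∑ w, μ w * q w a) ∧
        (∑ w, μ' w * g1 w = ∑ w, μ w * g1 w) ∧
        (∑ w, μ' w * g2 w = ∑ w, μ w * g2 w) ∧
        ∑ w, μ w * c w ≤ ∑ w, μ' w * c w by
    intro μ hμ hrow
    exact H (Finset.univ.filter (fun w => μ w ≠ 0)).card μ le_rfl hμ hrow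
  intro n
  induction n with
  | zero =>
    intro μ hcard hμ hrow
    exact ⟨μ, hμ, fun w h => h, le_trans hcard (by omega), fun a => rfl, rfl, rfl, le_rfl⟩
  | succ n IH =>
    intro μ hcard hμ hrow
    set s : Finset (Fin m) := Finset.univ.filter (fun w => μ w ≠ 0) with hsdef
    by_cases hsmall : s.card ≤ Fintype.card 𝒳 * Fintype.card 𝒴 + 2
    · exact ⟨μ, hμ, fun w h => h, hsmall, fun a => rfl, rfl, rfl, le_rfl⟩
    have hbig : Fintype.card 𝒳 * Fintype.card 𝒴 + 2 < s.card := not_le.1 hsmall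
    -- the atoms, viewed in a function space of dimension |𝒳||𝒴| + 2
    set V : {w // w ∈ s} → ((𝒳 × 𝒴) ⊕ Fin 2 → ℝ) := fun w =>
      Sum.elim (q ↑w) (fun t => if t = 0 then g1 ↑w else g2 ↑w) with hVdef
    have hfr : Module.finrank ℝ ((𝒳 × 𝒴) ⊕ Fin 2 → ℝ)
        = Fintype.card 𝒳 * Fintype.card 𝒴 + 2 := by
      rw [Module.finrank_pi, Fintype.card_sum, Fintype.card_prod, Fintype.card_fin]
    have hnli : ¬ LinearIndependent ℝ V := by
      intro hli
      have := hli.fintype_card_le_finrank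
      rw [Fintype.card_coe, hfr] at this
      omega
    obtain ⟨g, hgsum, i0, hgi0⟩ := Fintype.not_linearIndependent_iff.1 hnli
    set ν : Fin m → ℝ := fun w => if h : w ∈ s then g ⟨w, h⟩ else 0 with hνdef
    have hν0 : ∀ w ∉ s, ν w = 0 := fun w hw => dif_neg hw
    have key : ∀ F : Fin m → ℝ, ∑ w, ν w * F w = ∑ i : {w // w ∈ s}, g i * F ↑i := by
      intro F
      rw [← Finset.sum_subset (Finset.subset_univ s)
        (fun w _ hw => by rw [hν0 w hw, zero_mul])]
      rw [← Finset.sum_coe_sort s (fun w => ν w * F w)]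
      exact Finset.sum_congr rfl fun i _ => by rw [hνdef]; simp [dif_pos i.2]
    have heval : ∀ j, ∑ i : {w // w ∈ s}, g i * V i j = 0 := by
      intro j
      have := congrFun hgsum j
      rw [Finset.sum_apply] at this
      simpa using this
    have hq0 : ∀ a, ∑ w, ν w * q w a = 0 := by
      intro a
      rw [key (fun w => q w a)]
      exact heval (Sum.inl a)
    have hg1 : ∑ w, ν w * g1 w = 0 := by
      rw [key g1]
      have := heval (Sum.inr 0)
      simpa [hVdef] using this
    have hg2 : ∑ w, ν w * g2 w = 0 := by
      rw [key g2]
      have := heval (Sum.inr 1)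
      simpa [hVdef] using this
    have hνsum : ∑ w, ν w = 0 := by
      have e1 : ∀ w, ν w = ∑ a, ν w * q w a := by
        intro w
        by_cases hw : w ∈ s
        · rw [← Finset.mul_sum, hrow w (by simpa [hsdef] using hw), mul_one]
        · rw [hν0 w hw]
          exact (Finset.sum_eq_zero fun a _ => zero_mul _).symm
      rw [Finset.sum_congr rfl fun w _ => e1 w, Finset.sum_comm]
      exact Finset.sum_eq_zero fun a _ => hq0 a
    have hνi0 : ν (↑i0) ≠ 0 := by
      rw [hνdef]
      simpa [dif_pos i0.2] using hgi0
    -- a direction with nonnegative objective derivative and some negative coordinate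
    have main : ∀ ν' : Fin m → ℝ, (∀ w ∉ s, ν' w = 0) →
        (∀ a, ∑ w, ν' w * q w a = 0) → (∑ w, ν' w * g1 w = 0) →
        (∑ w, ν' w * g2 w = 0) → (∑ w, ν' w = 0) → 0 ≤ ∑ w, ν' w * c w →
        (∃ w, ν' w < 0) →
        ∃ μ' : Fin m → ℝ, (∀ w, 0 ≤ μ' w) ∧ (∀ w, μ' w ≠ 0 → μ w ≠ 0) ∧
          (Finset.univ.filter (fun w => μ' w ≠ 0)).card
            ≤ Fintype.card 𝒳 * Fintype.card 𝒴 + 2 ∧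
          (∀ a, ∑ w, μ' w * q w a = ∑ w, μ w * q w a) ∧
          (∑ w, μ' w * g1 w = ∑ w, μ w * g1 w) ∧
          (∑ w, μ' w * g2 w = ∑ w, μ w * g2 w) ∧
          ∑ w, μ w * c w ≤ ∑ w, μ' w * c w := by
      intro ν' hν'0 hq' h1' h2' hsum' hc' ⟨wneg, hwneg⟩
      set T : Finset (Fin m) := Finset.univ.filter (fun w => ν' w < 0) with hTdef
      have hTne : T.Nonempty := ⟨wneg, by simp [hTdef, hwneg]⟩
      set t : ℝ := (T.image (fun w => μ w / (-ν' w))).min' (hTne.image _) with htdef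
      obtain ⟨wstar, hwstarT, hwstar⟩ :=
        Finset.mem_image.1 ((T.image (fun w => μ w / (-ν' w))).min'_mem (hTne.image _))
      have hwstarneg : ν' wstar < 0 := by
        simpa [hTdef] using hwstarT
      have ht_le : ∀ w ∈ T, t ≤ μ w / (-ν' w) := fun w hw =>
        Finset.min'_le _ _ (Finset.mem_image_of_mem _ hw)
      have ht0 : 0 ≤ t := by
        rw [htdef, ← hwstar]
        exact div_nonneg (hμ wstar) (by linarith)
      set μ₂ : Fin m → ℝ := fun w => μ w + t * ν' w with hμ₂def
      have hμ₂0 : ∀ w, 0 ≤ μ₂ w := by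
        intro w
        rcases le_or_gt 0 (ν' w) with h | h
        · have := mul_nonneg ht0 h
          simp only [hμ₂def]
          linarith [hμ w]
        · have hle := ht_le w (by simp [hTdef, h])
          rw [le_div_iff₀ (by linarith : 0 < -ν' w)] at hle
          simp only [hμ₂def]
          nlinarith
      have hμ₂supp : ∀ w, μ₂ w ≠ 0 → μ w ≠ 0 := by
        intro w hw h
        have hws : w ∉ s := by simp [hsdef, h]
        have := hν'0 w hws
        simp only [hμ₂def] at hw
        rw [h, this] at hw
        simp at hw
      have hμ₂star : μ₂ wstar = 0 := by
        have hne' : ν' wstar ≠ 0 := ne_of_lt hwstarneg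
        simp only [hμ₂def]
        rw [htdef, ← hwstar]
        have hkey : μ wstar / -ν' wstar * ν' wstar = -μ wstar := by
          rw [div_mul_eq_mul_div, div_neg, mul_div_assoc, div_self hne', mul_one]
        linarith [hkey]
      have hssubset : Finset.univ.filter (fun w => μ₂ w ≠ 0) ⊂ s := by
        constructor
        · intro w hw
          simp only [Finset.mem_filter, Finset.mem_univ, true_and] at hw
          simp only [hsdef, Finset.mem_filter, Finset.mem_univ, true_and]
          exact hμ₂supp w hw
        · intro hsub
          have hwstars : wstar ∈ s := by
            simp only [hsdef, Finset.mem_filter, Finset.mem_univ, true_and]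
            intro h
            have hns : wstar ∉ s := by simp [hsdef, h]
            have := hν'0 wstar hns
            linarith
          have := hsub hwstars
          simp only [Finset.mem_filter, Finset.mem_univ, true_and] at this
          exact this hμ₂star
      have hcard₂ : (Finset.univ.filter (fun w => μ₂ w ≠ 0)).card ≤ n := by
        have := Finset.card_lt_card hssubset
        omega
      have hrow₂ : ∀ w, μ₂ w ≠ 0 → ∑ a, q w a = 1 := fun w hw => hrow w (hμ₂supp w hw)
      obtain ⟨μ', h0', hsupp', hcard', hq'', h1'', h2'', hc''⟩ := IH μ₂ hcard₂ hμ₂0 hrow₂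
      refine ⟨μ', h0', fun w h => hμ₂supp w (hsupp' w h), hcard', ?_, ?_, ?_, ?_⟩
      · intro a
        rw [hq'' a]
        simp only [hμ₂def]
        rw [Finset.sum_congr rfl (fun w _ => by ring :
          ∀ w ∈ Finset.univ, (μ w + t * ν' w) * q w a = μ w * q w a + t * (ν' w * q w a)),
          Finset.sum_add_distrib, ← Finset.mul_sum, hq' a, mul_zero, add_zero]
      · rw [h1'']
        simp only [hμ₂def]
        rw [Finset.sum_congr rfl (fun w _ => by ring :
          ∀ w ∈ Finset.univ, (μ w + t * ν' w) * g1 w = μ w * g1 w + t * (ν' w * g1 w)),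
          Finset.sum_add_distrib, ← Finset.mul_sum, h1', mul_zero, add_zero]
      · rw [h2'']
        simp only [hμ₂def]
        rw [Finset.sum_congr rfl (fun w _ => by ring :
          ∀ w ∈ Finset.univ, (μ w + t * ν' w) * g2 w = μ w * g2 w + t * (ν' w * g2 w)),
          Finset.sum_add_distrib, ← Finset.mul_sum, h2', mul_zero, add_zero]
      · refine le_trans ?_ hc''
        simp only [hμ₂def]
        rw [Finset.sum_congr rfl (fun w _ => by ring :
          ∀ w ∈ Finset.univ, (μ w + t * ν' w) * c w = μ w * c w + t * (ν' w * c w)),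
          Finset.sum_add_distrib, ← Finset.mul_sum]
        nlinarith [mul_nonneg ht0 hc']
    -- apply `main` to `ν` or `-ν` according to the sign of the objective derivative
    have hex : ∀ ν' : Fin m → ℝ, (∀ w ∉ s, ν' w = 0) → (∑ w, ν' w = 0) → ν' ↑i0 ≠ 0 →
        ∃ w, ν' w < 0 := by
      intro ν' hsupp hsum hne
      by_contra h
      push_neg at h
      have : ∀ w ∈ Finset.univ, ν' w = 0 :=
        (Finset.sum_eq_zero_iff_of_nonneg (fun w _ => h w)).1 hsum
      exact hne (this _ (Finset.mem_univ _))
    rcases le_or_gt 0 (∑ w, ν w * c w) with hc | hc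
    · exact main ν hν0 hq0 hg1 hg2 hνsum hc (hex ν hν0 hνsum hνi0)
    · refine main (fun w => -ν w) (fun w hw => by show -ν w = 0; rw [hν0 w hw, neg_zero])
        (fun a => by
          rw [Finset.sum_congr rfl (fun w _ => by ring :
            ∀ w ∈ Finset.univ, -ν w * q w a = -(ν w * q w a)), Finset.sum_neg_distrib,
            hq0 a, neg_zero])
        (by rw [Finset.sum_congr rfl (fun w _ => by ring :
            ∀ w ∈ Finset.univ, -ν w * g1 w = -(ν w * g1 w)), Finset.sum_neg_distrib,
            hg1, neg_zero])
        (by rw [Finset.sum_congr rfl (fun w _ => by ring :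
            ∀ w ∈ Finset.univ, -ν w * g2 w = -(ν w * g2 w)), Finset.sum_neg_distrib,
            hg2, neg_zero])
        (by rw [Finset.sum_neg_distrib, hνsum, neg_zero])
        (by
          rw [Finset.sum_congr rfl (fun w _ => by ring :
            ∀ w ∈ Finset.univ, -ν w * c w = -(ν w * c w)), Finset.sum_neg_distrib]
          linarith)
        (hex (fun w => -ν w) (fun w hw => by show -ν w = 0; rw [hν0 w hw, neg_zero])
          (by rw [Finset.sum_neg_distrib, hνsum, neg_zero]) (by simpa using hνi0))

end

end GWAux
namespace GWAux
set_option linter.unusedVariables false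
set_option linter.unusedSectionVars false
set_option maxHeartbeats 1000000

open Real Finset Filter
open GW

noncomputable section

variable {𝒳 𝒴 : Type*} [Fintype 𝒳] [Fintype 𝒴]

lemma Rgw_convex_combo {p : 𝒳 × 𝒴 → ℝ} (hp : IsProb p) {u1 u2 v1 v2 α β : ℝ}
    (hu1 : 0 ≤ u1) (hu2 : 0 ≤ u2) (hv1 : 0 ≤ v1) (hv2 : 0 ≤ v2)
    (hα : 0 ≤ α) (hβ : 0 ≤ β) (hαβ : α + β = 1) :
    Rgw p (α * u1 + β * v1) (α * u2 + β * v2)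
      ≤ α * Rgw p u1 u2 + β * Rgw p v1 v2 := by
  rcases eq_or_lt_of_le hα with hα0 | hαpos
  · have hβ1 : β = 1 := by linarith
    rw [← hα0, hβ1]
    simp
  rcases eq_or_lt_of_le hβ with hβ0 | hβpos
  · have hα1 : α = 1 := by linarith
    rw [← hβ0, hα1]
    simp
  apply le_of_forall_pos_le_add
  intro ε hε
  obtain ⟨ρ1, hρ1mem, hρ1lt⟩ :=
    Real.lt_sInf_add_pos (rset_nonempty hp hu1 hu2) hε
  obtain ⟨ρ2, hρ2mem, hρ2lt⟩ :=
    Real.lt_sInf_add_pos (rset_nonempty hp hv1 hv2) hε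
  obtain ⟨k1, hk1, K1, hch1, hcx1, hcy1, rfl⟩ := hρ1mem
  obtain ⟨k2, hk2, K2, hch2, hcx2, hcy2, rfl⟩ := hρ2mem
  classical
  -- combined decomposition on `Fin (k1 + k2)`
  set μJ : Fin k1 ⊕ Fin k2 → ℝ :=
    Sum.elim (fun i1 => α * outW p K1 i1) (fun i2 => β * outW p K2 i2) with hμJdef
  set qJ : Fin k1 ⊕ Fin k2 → 𝒳 × 𝒴 → ℝ := Sum.elim (dq p K1) (dq p K2) with hqJdef
  set μ : Fin (k1 + k2) → ℝ := fun i => μJ (finSumFinEquiv.symm i) with hμdef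
  set q : Fin (k1 + k2) → 𝒳 × 𝒴 → ℝ := fun i => qJ (finSumFinEquiv.symm i) with hqdef
  have hsum : ∀ F : Fin k1 ⊕ Fin k2 → ℝ,
      ∑ i : Fin (k1 + k2), F (finSumFinEquiv.symm i)
        = (∑ i1, F (Sum.inl i1)) + (∑ i2, F (Sum.inr i2)) := by
    intro F
    rw [Equiv.sum_comp finSumFinEquiv.symm F, Fintype.sum_sum_type]
  have hμJ0 : ∀ j, 0 ≤ μJ j := by
    rintro (i1 | i2)
    · exact mul_nonneg (le_of_lt hαpos) (outW_nonneg p K1 hp.1 hch1 i1)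
    · exact mul_nonneg (le_of_lt hβpos) (outW_nonneg p K2 hp.1 hch2 i2)
  have hqJ0 : ∀ j a, 0 ≤ qJ j a := by
    rintro (i1 | i2) a
    · exact dq_nonneg p K1 hp hch1 i1 a
    · exact dq_nonneg p K2 hp hch2 i2 a
  have hqJ1 : ∀ j, μJ j ≠ 0 → ∑ a, qJ j a = 1 := by
    rintro (i1 | i2) hne
    · exact dq_row p K1 hp hch1 i1 (fun h => hne (by
        show α * outW p K1 i1 = 0
        rw [h, mul_zero]))
    · exact dq_row p K2 hp hch2 i2 (fun h => hne (by
        show β * outW p K2 i2 = 0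
        rw [h, mul_zero]))
  have hμ0 : ∀ i, 0 ≤ μ i := fun i => hμJ0 _
  have hq0 : ∀ i a, 0 ≤ q i a := fun i a => hqJ0 _ a
  have hq1 : ∀ i, μ i ≠ 0 → ∑ a, q i a = 1 := fun i h => hqJ1 _ h
  have hmarg : ∀ a, ∑ i, μ i * q i a = p a := by
    intro a
    have h := hsum (fun j => μJ j * qJ j a)
    rw [show (∑ i, μ i * q i a)
        = ∑ i1, μJ (Sum.inl i1) * qJ (Sum.inl i1) a
          + ∑ i2, μJ (Sum.inr i2) * qJ (Sum.inr i2) a from h]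
    simp only [hμJdef, hqJdef, Sum.elim_inl, Sum.elim_inr]
    have e1 : ∑ i1, α * outW p K1 i1 * dq p K1 i1 a = α * p a := by
      rw [Finset.sum_congr rfl (fun i1 _ => by ring :
        ∀ i1 ∈ Finset.univ, α * outW p K1 i1 * dq p K1 i1 a
          = α * (outW p K1 i1 * dq p K1 i1 a)), ← Finset.mul_sum, dq_marg p K1 hp hch1 a]
    have e2 : ∑ i2, β * outW p K2 i2 * dq p K2 i2 a = β * p a := by
      rw [Finset.sum_congr rfl (fun i2 _ => by ring :
        ∀ i2 ∈ Finset.univ, β * outW p K2 i2 * dq p K2 i2 a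
          = β * (outW p K2 i2 * dq p K2 i2 a)), ← Finset.mul_sum, dq_marg p K2 hp hch2 a]
    rw [e1, e2, ← add_mul, hαβ, one_mul]
  obtain ⟨μ', hμ'0, hμ'supp, hμ'card, hμ'q, hμ'g1, hμ'g2, hμ'c⟩ :=
    reduce_support q (fun w => ent (fun x => ∑ y, q w (x, y)))
      (fun w => ent (fun y => ∑ x, q w (x, y))) (fun w => ent (q w)) μ hμ0 hq1
  obtain ⟨k', K', hk'card, hch', hI', hX', hY'⟩ :=
    exists_small_channel hp μ' q hμ'0 hq0
      (fun w h => hq1 w (hμ'supp w h)) (fun a => by rw [hμ'q a, hmarg a])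
  -- evaluate the three linear quantities for the combined weights `μ`
  have hXval : ∑ w, μ w * ent (fun x => ∑ y, q w (x, y))
      = α * condEntX p K1 + β * condEntX p K2 := by
    have h := hsum (fun j => μJ j * ent (fun x => ∑ y, qJ j (x, y)))
    rw [show (∑ w, μ w * ent (fun x => ∑ y, q w (x, y)))
        = ∑ i1, μJ (Sum.inl i1) * ent (fun x => ∑ y, qJ (Sum.inl i1) (x, y))
          + ∑ i2, μJ (Sum.inr i2) * ent (fun x => ∑ y, qJ (Sum.inr i2) (x, y)) from h]
    simp only [hμJdef, hqJdef, Sum.elim_inl, Sum.elim_inr]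
    rw [condEntX_decomp p K1 hp hch1, condEntX_decomp p K2 hp hch2,
      Finset.mul_sum, Finset.mul_sum]
    congr 1
    · refine Finset.sum_congr rfl fun i1 _ => ?_
      rw [show (fun x => ∑ y, dq p K1 i1 (x, y)) = dqX p K1 i1 from rfl]
      ring
    · refine Finset.sum_congr rfl fun i2 _ => ?_
      rw [show (fun x => ∑ y, dq p K2 i2 (x, y)) = dqX p K2 i2 from rfl]
      ring
  have hYval : ∑ w, μ w * ent (fun y => ∑ x, q w (x, y))
      = α * condEntY p K1 + β * condEntY p K2 := by
    have h := hsum (fun j => μJ j * ent (fun y => ∑ x, qJ j (x, y)))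
    rw [show (∑ w, μ w * ent (fun y => ∑ x, q w (x, y)))
        = ∑ i1, μJ (Sum.inl i1) * ent (fun y => ∑ x, qJ (Sum.inl i1) (x, y))
          + ∑ i2, μJ (Sum.inr i2) * ent (fun y => ∑ x, qJ (Sum.inr i2) (x, y)) from h]
    simp only [hμJdef, hqJdef, Sum.elim_inl, Sum.elim_inr]
    rw [condEntY_decomp p K1 hp hch1, condEntY_decomp p K2 hp hch2,
      Finset.mul_sum, Finset.mul_sum]
    congr 1
    · refine Finset.sum_congr rfl fun i1 _ => ?_
      rw [show (fun y => ∑ x, dq p K1 i1 (x, y)) = dqY p K1 i1 from rfl]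
      ring
    · refine Finset.sum_congr rfl fun i2 _ => ?_
      rw [show (fun y => ∑ x, dq p K2 i2 (x, y)) = dqY p K2 i2 from rfl]
      ring
  have hIval : ∑ w, μ w * ent (q w)
      = α * (∑ i1, outW p K1 i1 * ent (dq p K1 i1))
        + β * (∑ i2, outW p K2 i2 * ent (dq p K2 i2)) := by
    have h := hsum (fun j => μJ j * ent (qJ j))
    rw [show (∑ w, μ w * ent (q w))
        = ∑ i1, μJ (Sum.inl i1) * ent (qJ (Sum.inl i1))
          + ∑ i2, μJ (Sum.inr i2) * ent (qJ (Sum.inr i2)) from h]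
    simp only [hμJdef, hqJdef, Sum.elim_inl, Sum.elim_inr]
    rw [Finset.mul_sum, Finset.mul_sum]
    congr 1
    · exact Finset.sum_congr rfl fun i1 _ => by ring
    · exact Finset.sum_congr rfl fun i2 _ => by ring
  -- the small channel is feasible for the convex combination
  have hmem : mutInfoW p K' ∈ rset p (α * u1 + β * v1) (α * u2 + β * v2) := by
    refine ⟨k', by rw [hk'card]; exact hμ'card, K', hch', ?_, ?_, rfl⟩
    · rw [hX', hμ'g1, hXval]
      have h1 := mul_le_mul_of_nonneg_left hcx1 (le_of_lt hαpos)
      have h2 := mul_le_mul_of_nonneg_left hcx2 (le_of_lt hβpos)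
      linarith
    · rw [hY', hμ'g2, hYval]
      have h1 := mul_le_mul_of_nonneg_left hcy1 (le_of_lt hαpos)
      have h2 := mul_le_mul_of_nonneg_left hcy2 (le_of_lt hβpos)
      linarith
  have hIbound : mutInfoW p K' ≤ α * mutInfoW p K1 + β * mutInfoW p K2 := by
    rw [hI', mutInfo_decomp p K1 hp hch1, mutInfo_decomp p K2 hp hch2]
    have hent : ent p = α * ent p + β * ent p := by
      symm
      rw [← add_mul, hαβ, one_mul]
    have hobj := hμ'c
    rw [hIval] at hobj
    nlinarith [hobj, hent]
  calc Rgw p (α * u1 + β * v1) (α * u2 + β * v2) ≤ mutInfoW p K' :=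
        Rgw_le_of_mem hp hmem
  _ ≤ α * mutInfoW p K1 + β * mutInfoW p K2 := hIbound
  _ ≤ α * (Rgw p u1 u2 + ε) + β * (Rgw p v1 v2 + ε) := by
      have h1 := mul_le_mul_of_nonneg_left (le_of_lt hρ1lt) (le_of_lt hαpos)
      have h2 := mul_le_mul_of_nonneg_left (le_of_lt hρ2lt) (le_of_lt hβpos)
      rw [Rgw_eq_sInf p u1 u2, Rgw_eq_sInf p v1 v2]
      linarith
  _ = α * Rgw p u1 u2 + β * Rgw p v1 v2 + ε := by
      have : α * (Rgw p u1 u2 + ε) + β * (Rgw p v1 v2 + ε)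
          = α * Rgw p u1 u2 + β * Rgw p v1 v2 + (α + β) * ε := by ring
      rw [this, hαβ, one_mul]

end

end GWAux
namespace GWAux
set_option linter.unusedVariables false
set_option linter.unusedSectionVars false
set_option maxHeartbeats 1000000

open Real Finset Filter
open GW

noncomputable section

variable {𝒳 𝒴 : Type*} [Fintype 𝒳] [Fintype 𝒴]

lemma Rgw_hyperplane {p : 𝒳 × 𝒴 → ℝ} (hp : IsProb p) {r1s r2s lam1 lam2 : ℝ}
    (hr1 : 0 < r1s) (hr2 : 0 < r2s)
    (hd1 : HasDerivAt (fun r => Rgw p r r2s) (-lam1) r1s)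
    (hd2 : HasDerivAt (fun r => Rgw p r1s r) (-lam2) r2s)
    {s1 s2 : ℝ} (hs1 : 0 ≤ s1) (hs2 : 0 ≤ s2) :
    Rgw p r1s r2s - lam1 * (s1 - r1s) - lam2 * (s2 - r2s) ≤ Rgw p s1 s2 := by
  set d1 : ℝ := s1 - r1s with hd1def
  set d2 : ℝ := s2 - r2s with hd2def
  set R : ℝ := Rgw p r1s r2s with hRdef
  set S : ℝ := Rgw p s1 s2 with hSdef
  set G1 : ℝ → ℝ := fun u => Rgw p (r1s + -(2 * d1) * u) r2s with hG1def
  set G2 : ℝ → ℝ := fun u => Rgw p r1s (r2s + -(2 * d2) * u) with hG2def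
  have hG1deriv : HasDerivAt G1 ((-lam1) * -(2 * d1)) 0 := by
    have hinner : HasDerivAt (fun u : ℝ => r1s + -(2 * d1) * u) (-(2 * d1)) 0 := by
      simpa using ((hasDerivAt_id (0 : ℝ)).const_mul (-(2 * d1))).const_add r1s
    have hd1' : HasDerivAt (fun r => Rgw p r r2s) (-lam1)
        ((fun u : ℝ => r1s + -(2 * d1) * u) 0) := by
      have : (fun u : ℝ => r1s + -(2 * d1) * u) 0 = r1s := by norm_num
      rw [this]
      exact hd1
    have := hd1'.comp 0 hinner; exact this
  have hG2deriv : HasDerivAt G2 ((-lam2) * -(2 * d2)) 0 := by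
    have hinner : HasDerivAt (fun u : ℝ => r2s + -(2 * d2) * u) (-(2 * d2)) 0 := by
      simpa using ((hasDerivAt_id (0 : ℝ)).const_mul (-(2 * d2))).const_add r2s
    have hd2' : HasDerivAt (fun r => Rgw p r1s r) (-lam2)
        ((fun u : ℝ => r2s + -(2 * d2) * u) 0) := by
      have : (fun u : ℝ => r2s + -(2 * d2) * u) 0 = r2s := by norm_num
      rw [this]
      exact hd2
    have := hd2'.comp 0 hinner; exact this
  have hle : nhdsWithin (0 : ℝ) (Set.Ioi 0) ≤ nhdsWithin (0 : ℝ) {(0 : ℝ)}ᶜ :=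
    nhdsWithin_mono 0 (fun y hy => ne_of_gt hy)
  have hT1 : Tendsto (fun t => -(slope G1 0 t) / 2) (nhdsWithin 0 (Set.Ioi 0))
      (nhds (-((-lam1) * -(2 * d1)) / 2)) :=
    (((hasDerivAt_iff_tendsto_slope.1 hG1deriv).mono_left hle).neg).div_const 2
  have hT2 : Tendsto (fun t => -(slope G2 0 t) / 2) (nhdsWithin 0 (Set.Ioi 0))
      (nhds (-((-lam2) * -(2 * d2)) / 2)) :=
    (((hasDerivAt_iff_tendsto_slope.1 hG2deriv).mono_left hle).neg).div_const 2
  have hG10 : G1 0 = R := by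
    rw [hG1def]
    norm_num
    exact hRdef.symm
  have hG20 : G2 0 = R := by
    rw [hG2def]
    norm_num
    exact hRdef.symm
  set φ : ℝ → ℝ := fun t => (R - G1 t) / (2 * t) + (R - G2 t) / (2 * t) with hφdef
  have hφeq : ∀ᶠ t in nhdsWithin (0 : ℝ) (Set.Ioi 0),
      (fun t => -(slope G1 0 t) / 2 + -(slope G2 0 t) / 2) t = φ t := by
    filter_upwards [self_mem_nhdsWithin] with t ht
    have htne : (t : ℝ) ≠ 0 := ne_of_gt ht
    have hterm : ∀ A : ℝ, -((A - R) / (t - 0)) / 2 = (R - A) / (2 * t) := by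
      intro A
      rw [sub_zero, ← neg_div, neg_sub, div_div, mul_comm t 2]
    show -(slope G1 0 t) / 2 + -(slope G2 0 t) / 2
        = (R - G1 t) / (2 * t) + (R - G2 t) / (2 * t)
    simp only [slope_def_field, hG10, hG20]
    rw [hterm (G1 t), hterm (G2 t)]
  have hφT : Tendsto φ (nhdsWithin 0 (Set.Ioi 0))
      (nhds (-((-lam1) * -(2 * d1)) / 2 + -((-lam2) * -(2 * d2)) / 2)) :=
    Tendsto.congr' hφeq (hT1.add hT2)
  -- the eventual inequality
  set t0 : ℝ := min 1 (min (r1s / (2 * (|d1| + 1))) (r2s / (2 * (|d2| + 1)))) with ht0def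
  have ht0pos : 0 < t0 := by
    rw [ht0def]
    apply lt_min (by norm_num)
    exact lt_min (by positivity) (by positivity)
  have hev : ∀ᶠ t in nhdsWithin (0 : ℝ) (Set.Ioi 0), φ t ≤ S - R := by
    filter_upwards [Ioo_mem_nhdsGT_of_mem (Set.mem_Ico.2 ⟨le_refl (0 : ℝ), ht0pos⟩)]
      with t ht
    obtain ⟨htpos, htlt⟩ := ht
    have ht1 : t ≤ 1 := le_of_lt (lt_of_lt_of_le htlt (min_le_left _ _))
    have htd1 : 2 * t * (|d1| + 1) < r1s := by
      have h1 : t < r1s / (2 * (|d1| + 1)) :=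
        lt_of_lt_of_le htlt (le_trans (min_le_right _ _) (min_le_left _ _))
      rw [lt_div_iff₀ (by positivity)] at h1
      linarith
    have htd2 : 2 * t * (|d2| + 1) < r2s := by
      have h1 : t < r2s / (2 * (|d2| + 1)) :=
        lt_of_lt_of_le htlt (le_trans (min_le_right _ _) (min_le_right _ _))
      rw [lt_div_iff₀ (by positivity)] at h1
      linarith
    have habs1 : 2 * t * |d1| < r1s := by nlinarith [abs_nonneg d1]
    have habs2 : 2 * t * |d2| < r2s := by nlinarith [abs_nonneg d2]
    have hb1 : -(t * |d1|) ≤ t * d1 ∧ t * d1 ≤ t * |d1| := by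
      constructor
      · nlinarith [neg_abs_le d1, htpos.le]
      · nlinarith [le_abs_self d1, htpos.le]
    have hb2 : -(t * |d2|) ≤ t * d2 ∧ t * d2 ≤ t * |d2| := by
      constructor
      · nlinarith [neg_abs_le d2, htpos.le]
      · nlinarith [le_abs_self d2, htpos.le]
    have htabs1 : t * |d1| ≤ 2 * t * |d1| := by nlinarith [abs_nonneg d1, htpos.le]
    have htabs2 : t * |d2| ≤ 2 * t * |d2| := by nlinarith [abs_nonneg d2, htpos.le]
    -- quadrant positivity of all the points
    have c1p : 0 ≤ r1s + t * d1 := by linarith [hb1.1]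
    have c1m : 0 ≤ r1s - t * d1 := by linarith [hb1.2]
    have c1mm : 0 ≤ r1s + -(2 * d1) * t := by nlinarith [hb1.2]
    have c2p : 0 ≤ r2s + t * d2 := by linarith [hb2.1]
    have c2m : 0 ≤ r2s - t * d2 := by linarith [hb2.2]
    have c2mm : 0 ≤ r2s + -(2 * d2) * t := by nlinarith [hb2.2]
    -- three convexity inequalities
    have hA : Rgw p (r1s + t * d1) (r2s + t * d2) ≤ (1 - t) * R + t * S := by
      have := Rgw_convex_combo hp (le_of_lt hr1) (le_of_lt hr2) hs1 hs2
        (by linarith : (0:ℝ) ≤ 1 - t) (le_of_lt htpos) (by ring)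
      have e1 : (1 - t) * r1s + t * s1 = r1s + t * d1 := by rw [hd1def]; ring
      have e2 : (1 - t) * r2s + t * s2 = r2s + t * d2 := by rw [hd2def]; ring
      rw [e1, e2] at this
      exact this
    have hB : R ≤ (1/2) * Rgw p (r1s + t * d1) (r2s + t * d2)
        + (1/2) * Rgw p (r1s - t * d1) (r2s - t * d2) := by
      have := Rgw_convex_combo hp c1p c2p c1m c2m
        (by norm_num : (0:ℝ) ≤ 1/2) (by norm_num : (0:ℝ) ≤ 1/2) (by norm_num)
      have e1 : (1/2) * (r1s + t * d1) + (1/2) * (r1s - t * d1) = r1s := by ring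
      have e2 : (1/2) * (r2s + t * d2) + (1/2) * (r2s - t * d2) = r2s := by ring
      rw [e1, e2] at this
      exact this
    have hC : Rgw p (r1s - t * d1) (r2s - t * d2)
        ≤ (1/2) * G1 t + (1/2) * G2 t := by
      have := Rgw_convex_combo hp c1mm (le_of_lt hr2) (le_of_lt hr1) c2mm
        (by norm_num : (0:ℝ) ≤ 1/2) (by norm_num : (0:ℝ) ≤ 1/2) (by norm_num)
      have e1 : (1/2) * (r1s + -(2 * d1) * t) + (1/2) * r1s = r1s - t * d1 := by ring
      have e2 : (1/2) * r2s + (1/2) * (r2s + -(2 * d2) * t) = r2s - t * d2 := by ring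
      rw [e1, e2] at this
      exact this
    -- combine
    show (R - G1 t) / (2 * t) + (R - G2 t) / (2 * t) ≤ S - R
    have hkey : (R - G1 t) / (2 * t) + (R - G2 t) / (2 * t)
        = (2 * R - G1 t - G2 t) / (2 * t) := by
      field_simp
      ring
    rw [hkey, div_le_iff₀ (by positivity : (0:ℝ) < 2 * t)]
    nlinarith [hA, hB, hC]
  have hlim := le_of_tendsto hφT hev
  have : -((-lam1) * -(2 * d1)) / 2 + -((-lam2) * -(2 * d2)) / 2
      = -(lam1 * d1) - lam2 * d2 := by ring
  rw [this] at hlim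
  linarith

end

end GWAux
namespace GWAux
set_option linter.unusedVariables false
set_option linter.unusedSectionVars false
set_option maxHeartbeats 1000000

open Real Finset
open GW

noncomputable section

variable {𝒳 𝒴 : Type*} [Fintype 𝒳] [Fintype 𝒴]

lemma gibbs_out {p : 𝒳 × 𝒴 → ℝ} (hp : IsProb p) {k : ℕ}
    (K K' : 𝒳 × 𝒴 → Fin k → ℝ) (hch : IsChannel K) (hch' : IsChannel K')
    (hacW : ∀ w, outW p K w = 0 → outW p K' w = 0) :
    mutInfoW p K' ≤ ∑ a, ∑ w, p a * K' a w * Real.logb 2 (K' a w / outW p K w) := by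
  have key : 0 ≤ ∑ w, outW p K' w * Real.logb 2 (outW p K' w / outW p K w) :=
    gibbs _ _ (fun w => outW_nonneg p K' hp.1 hch' w) (sum_outW p K' hp hch')
      (le_of_eq (sum_outW p K hp hch)) (fun w => outW_nonneg p K hp.1 hch w) hacW
  have per : ∀ (a : 𝒳 × 𝒴) w, p a * K' a w * Real.logb 2 (K' a w / outW p K w)
      = p a * K' a w * Real.logb 2 (K' a w / outW p K' w)
        + p a * K' a w * Real.logb 2 (outW p K' w / outW p K w) := by
    intro a w
    rcases eq_or_ne (p a * K' a w) 0 with h0 | hne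
    · rw [h0]; ring
    · have hpa : 0 < p a := lt_of_le_of_ne (hp.1 a) fun h => hne (by rw [← h]; ring)
      have hKa : 0 < K' a w := lt_of_le_of_ne ((hch' a).1 w) fun h => hne (by rw [← h]; ring)
      have hout' : 0 < outW p K' w :=
        lt_of_lt_of_le (by positivity) (pK_le_outW p K' hp.1 hch' a w)
      have hout : 0 < outW p K w := by
        rcases eq_or_lt_of_le (outW_nonneg p K hp.1 hch w) with h | h
        · exact absurd (hacW w h.symm) (ne_of_gt hout')
        · exact h
      rw [Real.logb_div (ne_of_gt hKa) (ne_of_gt hout),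
        Real.logb_div (ne_of_gt hKa) (ne_of_gt hout'),
        Real.logb_div (ne_of_gt hout') (ne_of_gt hout)]
      ring
  have expand : ∑ a, ∑ w, p a * K' a w * Real.logb 2 (K' a w / outW p K w)
      = mutInfoW p K' + ∑ w, outW p K' w * Real.logb 2 (outW p K' w / outW p K w) := by
    rw [mutInfo_eq p K' hp hch']
    rw [Finset.sum_congr rfl fun a (_ : a ∈ univ) => Finset.sum_congr rfl
      (fun w (_ : w ∈ univ) => per a w)]
    rw [Finset.sum_congr rfl fun a (_ : a ∈ univ) => Finset.sum_add_distrib,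
      Finset.sum_add_distrib]
    congr 1
    rw [Finset.sum_comm]
    refine Finset.sum_congr rfl fun w _ => ?_
    rw [outW, Finset.sum_mul]
  rw [expand]
  linarith

lemma gibbs_condX {p : 𝒳 × 𝒴 → ℝ} (hp : IsProb p) {k : ℕ}
    (K K' : 𝒳 × 𝒴 → Fin k → ℝ) (hch : IsChannel K) (hch' : IsChannel K')
    (hacW : ∀ w, outW p K w = 0 → outW p K' w = 0)
    (hacX : ∀ w x, margWX p K (w, x) = 0 → margWX p K' (w, x) = 0) :
    condEntX p K' ≤ ∑ a, ∑ w, p a * K' a w * (-Real.logb 2 (condXW p K w a.1)) := by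
  have per : ∀ (a : 𝒳 × 𝒴) w, p a * K' a w * (-Real.logb 2 (condXW p K w a.1))
      = p a * K' a w * (-Real.logb 2 (condXW p K' w a.1))
        + p a * K' a w * Real.logb 2 (condXW p K' w a.1 / condXW p K w a.1) := by
    intro a w
    rcases eq_or_ne (p a * K' a w) 0 with h0 | hne
    · rw [h0]; ring
    · have hpa : 0 < p a := lt_of_le_of_ne (hp.1 a) fun h => hne (by rw [← h]; ring)
      have hKa : 0 < K' a w := lt_of_le_of_ne ((hch' a).1 w) fun h => hne (by rw [← h]; ring)
      have hmarg' : 0 < margWX p K' (w, a.1) := by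
        have h := pK_le_margWX p K' hp.1 hch' a.1 a.2 w
        rw [Prod.mk.eta] at h
        exact lt_of_lt_of_le (mul_pos hpa hKa) h
      have hout' : 0 < outW p K' w :=
        lt_of_lt_of_le hmarg' (margWX_le_outW p K' hp.1 hch' w a.1)
      have hout : 0 < outW p K w := by
        rcases eq_or_lt_of_le (outW_nonneg p K hp.1 hch w) with h | h
        · exact absurd (hacW w h.symm) (ne_of_gt hout')
        · exact h
      have hmarg : 0 < margWX p K (w, a.1) := by
        rcases eq_or_lt_of_le (margWX_nonneg p K hp.1 hch w a.1) with h | h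
        · exact absurd (hacX w a.1 h.symm) (ne_of_gt hmarg')
        · exact h
      have hcx' : 0 < condXW p K' w a.1 := div_pos hmarg' hout'
      have hcx : 0 < condXW p K w a.1 := div_pos hmarg hout
      rw [Real.logb_div (ne_of_gt hcx') (ne_of_gt hcx)]
      ring
  have expand : ∑ a, ∑ w, p a * K' a w * (-Real.logb 2 (condXW p K w a.1))
      = condEntX p K'
        + ∑ w, ∑ x, margWX p K' (w, x)
            * Real.logb 2 (condXW p K' w x / condXW p K w x) := by
    rw [condEntX_eq p K' hp hch']
    rw [Finset.sum_congr rfl fun a (_ : a ∈ univ) => Finset.sum_congr rfl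
      (fun w (_ : w ∈ univ) => per a w)]
    rw [Finset.sum_congr rfl fun a (_ : a ∈ univ) => Finset.sum_add_distrib,
      Finset.sum_add_distrib]
    congr 1
    rw [Finset.sum_comm]
    have swap : ∀ w, ∑ a : 𝒳 × 𝒴, p a * K' a w
        * Real.logb 2 (condXW p K' w a.1 / condXW p K w a.1)
        = ∑ x, margWX p K' (w, x) * Real.logb 2 (condXW p K' w x / condXW p K w x) := by
      intro w
      rw [Fintype.sum_prod_type]
      refine Finset.sum_congr rfl fun x _ => ?_
      rw [margWX, Finset.sum_mul]
    exact Finset.sum_congr rfl fun w _ => swap w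
  have key : 0 ≤ ∑ w, ∑ x, margWX p K' (w, x)
      * Real.logb 2 (condXW p K' w x / condXW p K w x) := by
    refine Finset.sum_nonneg fun w _ => ?_
    rcases eq_or_lt_of_le (outW_nonneg p K' hp.1 hch' w) with hout'0 | hout'
    · refine Finset.sum_nonneg fun x _ => ?_
      have h1 : margWX p K' (w, x) = 0 := by
        have h2 := margWX_le_outW p K' hp.1 hch' w x
        have h3 := margWX_nonneg p K' hp.1 hch' w x
        rw [← hout'0] at h2
        linarith
      rw [h1, zero_mul]
    · have hout : 0 < outW p K w := by
        rcases eq_or_lt_of_le (outW_nonneg p K hp.1 hch w) with h | h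
        · exact absurd (hacW w h.symm) (ne_of_gt hout')
        · exact h
      have hgibbs := gibbs (fun x => condXW p K' w x) (fun x => condXW p K w x)
        (fun x => div_nonneg (margWX_nonneg p K' hp.1 hch' w x) (le_of_lt hout'))
        (by
          rw [show (∑ x, condXW p K' w x) = (∑ x, margWX p K' (w, x)) / outW p K' w by
            rw [Finset.sum_div]; rfl]
          rw [sum_margWX p K' w, div_self (ne_of_gt hout')])
        (le_of_eq (by
          rw [show (∑ x, condXW p K w x) = (∑ x, margWX p K (w, x)) / outW p K w by
            rw [Finset.sum_div]; rfl]
          rw [sum_margWX p K w, div_self (ne_of_gt hout)]))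
        (fun x => div_nonneg (margWX_nonneg p K hp.1 hch w x) (le_of_lt hout))
        (fun x hx => by
          have hx' : margWX p K (w, x) / outW p K w = 0 := hx
          have hm : margWX p K (w, x) = 0 := by
            rcases div_eq_zero_iff.1 hx' with h | h
            · exact h
            · exact absurd h (ne_of_gt hout)
          show margWX p K' (w, x) / outW p K' w = 0
          rw [hacX w x hm, zero_div])
      have conv : ∑ x, margWX p K' (w, x)
          * Real.logb 2 (condXW p K' w x / condXW p K w x)
          = outW p K' w * ∑ x, condXW p K' w x
              * Real.logb 2 (condXW p K' w x / condXW p K w x) := by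
        rw [Finset.mul_sum]
        refine Finset.sum_congr rfl fun x _ => ?_
        rw [show condXW p K' w x = margWX p K' (w, x) / outW p K' w from rfl,
          ← mul_assoc, mul_div_cancel₀ _ (ne_of_gt hout')]
      rw [conv]
      exact mul_nonneg (le_of_lt hout') hgibbs
  rw [expand]
  linarith

lemma gibbs_condY {p : 𝒳 × 𝒴 → ℝ} (hp : IsProb p) {k : ℕ}
    (K K' : 𝒳 × 𝒴 → Fin k → ℝ) (hch : IsChannel K) (hch' : IsChannel K')
    (hacW : ∀ w, outW p K w = 0 → outW p K' w = 0)
    (hacY : ∀ w y, margWY p K (w, y) = 0 → margWY p K' (w, y) = 0) :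
    condEntY p K' ≤ ∑ a, ∑ w, p a * K' a w * (-Real.logb 2 (condYW p K w a.2)) := by
  have per : ∀ (a : 𝒳 × 𝒴) w, p a * K' a w * (-Real.logb 2 (condYW p K w a.2))
      = p a * K' a w * (-Real.logb 2 (condYW p K' w a.2))
        + p a * K' a w * Real.logb 2 (condYW p K' w a.2 / condYW p K w a.2) := by
    intro a w
    rcases eq_or_ne (p a * K' a w) 0 with h0 | hne
    · rw [h0]; ring
    · have hpa : 0 < p a := lt_of_le_of_ne (hp.1 a) fun h => hne (by rw [← h]; ring)
      have hKa : 0 < K' a w := lt_of_le_of_ne ((hch' a).1 w) fun h => hne (by rw [← h]; ring)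
      have hmarg' : 0 < margWY p K' (w, a.2) := by
        have h := pK_le_margWY p K' hp.1 hch' a.1 a.2 w
        rw [Prod.mk.eta] at h
        exact lt_of_lt_of_le (mul_pos hpa hKa) h
      have hout' : 0 < outW p K' w :=
        lt_of_lt_of_le hmarg' (margWY_le_outW p K' hp.1 hch' w a.2)
      have hout : 0 < outW p K w := by
        rcases eq_or_lt_of_le (outW_nonneg p K hp.1 hch w) with h | h
        · exact absurd (hacW w h.symm) (ne_of_gt hout')
        · exact h
      have hmarg : 0 < margWY p K (w, a.2) := by
        rcases eq_or_lt_of_le (margWY_nonneg p K hp.1 hch w a.2) with h | h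
        · exact absurd (hacY w a.2 h.symm) (ne_of_gt hmarg')
        · exact h
      have hcy' : 0 < condYW p K' w a.2 := div_pos hmarg' hout'
      have hcy : 0 < condYW p K w a.2 := div_pos hmarg hout
      rw [Real.logb_div (ne_of_gt hcy') (ne_of_gt hcy)]
      ring
  have expand : ∑ a, ∑ w, p a * K' a w * (-Real.logb 2 (condYW p K w a.2))
      = condEntY p K'
        + ∑ w, ∑ y, margWY p K' (w, y)
            * Real.logb 2 (condYW p K' w y / condYW p K w y) := by
    rw [condEntY_eq p K' hp hch']
    rw [Finset.sum_congr rfl fun a (_ : a ∈ univ) => Finset.sum_congr rfl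
      (fun w (_ : w ∈ univ) => per a w)]
    rw [Finset.sum_congr rfl fun a (_ : a ∈ univ) => Finset.sum_add_distrib,
      Finset.sum_add_distrib]
    congr 1
    rw [Finset.sum_comm]
    have swap : ∀ w, ∑ a : 𝒳 × 𝒴, p a * K' a w
        * Real.logb 2 (condYW p K' w a.2 / condYW p K w a.2)
        = ∑ y, margWY p K' (w, y) * Real.logb 2 (condYW p K' w y / condYW p K w y) := by
      intro w
      rw [Fintype.sum_prod_type, Finset.sum_comm]
      refine Finset.sum_congr rfl fun y _ => ?_
      rw [margWY, Finset.sum_mul]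
    exact Finset.sum_congr rfl fun w _ => swap w
  have key : 0 ≤ ∑ w, ∑ y, margWY p K' (w, y)
      * Real.logb 2 (condYW p K' w y / condYW p K w y) := by
    refine Finset.sum_nonneg fun w _ => ?_
    rcases eq_or_lt_of_le (outW_nonneg p K' hp.1 hch' w) with hout'0 | hout'
    · refine Finset.sum_nonneg fun y _ => ?_
      have h1 : margWY p K' (w, y) = 0 := by
        have h2 := margWY_le_outW p K' hp.1 hch' w y
        have h3 := margWY_nonneg p K' hp.1 hch' w y
        rw [← hout'0] at h2
        linarith
      rw [h1, zero_mul]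
    · have hout : 0 < outW p K w := by
        rcases eq_or_lt_of_le (outW_nonneg p K hp.1 hch w) with h | h
        · exact absurd (hacW w h.symm) (ne_of_gt hout')
        · exact h
      have hgibbs := gibbs (fun y => condYW p K' w y) (fun y => condYW p K w y)
        (fun y => div_nonneg (margWY_nonneg p K' hp.1 hch' w y) (le_of_lt hout'))
        (by
          rw [show (∑ y, condYW p K' w y) = (∑ y, margWY p K' (w, y)) / outW p K' w by
            rw [Finset.sum_div]; rfl]
          rw [sum_margWY p K' w, div_self (ne_of_gt hout')])
        (le_of_eq (by
          rw [show (∑ y, condYW p K w y) = (∑ y, margWY p K (w, y)) / outW p K w by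
            rw [Finset.sum_div]; rfl]
          rw [sum_margWY p K w, div_self (ne_of_gt hout)]))
        (fun y => div_nonneg (margWY_nonneg p K hp.1 hch w y) (le_of_lt hout))
        (fun y hy => by
          have hy' : margWY p K (w, y) / outW p K w = 0 := hy
          have hm : margWY p K (w, y) = 0 := by
            rcases div_eq_zero_iff.1 hy' with h | h
            · exact h
            · exact absurd h (ne_of_gt hout)
          show margWY p K' (w, y) / outW p K' w = 0
          rw [hacY w y hm, zero_div])
      have conv : ∑ y, margWY p K' (w, y)
          * Real.logb 2 (condYW p K' w y / condYW p K w y)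
          = outW p K' w * ∑ y, condYW p K' w y
              * Real.logb 2 (condYW p K' w y / condYW p K w y) := by
        rw [Finset.mul_sum]
        refine Finset.sum_congr rfl fun y _ => ?_
        rw [show condYW p K' w y = margWY p K' (w, y) / outW p K' w from rfl,
          ← mul_assoc, mul_div_cancel₀ _ (ne_of_gt hout')]
      rw [conv]
      exact mul_nonneg (le_of_lt hout') hgibbs
  rw [expand]
  linarith

end

end GWAux
namespace GWAux
set_option linter.unusedVariables false
set_option linter.unusedSectionVars false
set_option maxHeartbeats 1000000

open Real Finset
open GW

noncomputable section

variable {𝒳 𝒴 : Type*} [Fintype 𝒳] [Fintype 𝒴]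

lemma sum_Lam_ge {p : 𝒳 × 𝒴 → ℝ} (hp : IsProb p) {r1s r2s lam1 lam2 : ℝ}
    (hr1 : 0 < r1s) (hr2 : 0 < r2s)
    (hd1 : HasDerivAt (fun r => Rgw p r r2s) (-lam1) r1s)
    (hd2 : HasDerivAt (fun r => Rgw p r1s r) (-lam2) r2s)
    (hl1 : 0 < lam1) (hl2 : 0 < lam2)
    {k : ℕ} {K : 𝒳 × 𝒴 → Fin k → ℝ} (hK : IsOptChannel p r1s r2s K) :
    Rgw p r1s r2s ≤ ∑ a : 𝒳 × 𝒴, p a *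
      Lam r1s r2s lam1 lam2 (outW p K) (condXW p K) (condYW p K) a.1 a.2 := by
  classical
  obtain ⟨hkcard, hch, hle1, hle2, hopt⟩ := hK
  obtain ⟨a0, ha0⟩ : ∃ a, p a ≠ 0 := by
    by_contra h
    push_neg at h
    have h2 := hp.2
    rw [Finset.sum_eq_zero (fun a _ => h a)] at h2
    norm_num at h2
  have hkpos : 0 < k := by
    rcases Nat.eq_zero_or_pos k with h | h
    · exfalso
      have h2 := (hch a0).2
      subst h
      simp at h2
    · exact h
  set Zf : 𝒳 × 𝒴 → ℝ := fun a => ∑ w, outW p K w *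
    (if condXW p K w a.1 = 0 ∨ condYW p K w a.2 = 0 then 0 else
      (2 : ℝ) ^ (lam1 * (r1s + Real.logb 2 (condXW p K w a.1))
        + lam2 * (r2s + Real.logb 2 (condYW p K w a.2)))) with hZdef
  have hLamZ : ∀ a : 𝒳 × 𝒴,
      Lam r1s r2s lam1 lam2 (outW p K) (condXW p K) (condYW p K) a.1 a.2
        = -Real.logb 2 (Zf a) := fun a => rfl
  have htermnn : ∀ (a : 𝒳 × 𝒴) w, 0 ≤ outW p K w *
      (if condXW p K w a.1 = 0 ∨ condYW p K w a.2 = 0 then 0 else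
        (2 : ℝ) ^ (lam1 * (r1s + Real.logb 2 (condXW p K w a.1))
          + lam2 * (r2s + Real.logb 2 (condYW p K w a.2)))) := by
    intro a w
    apply mul_nonneg (outW_nonneg p K hp.1 hch w)
    split
    · exact le_refl 0
    · positivity
  have hZnn : ∀ a, 0 ≤ Zf a := fun a => Finset.sum_nonneg fun w _ => htermnn a w
  have hZpos : ∀ a, p a ≠ 0 → 0 < Zf a := by
    intro a hpa
    have hppos : 0 < p a := lt_of_le_of_ne (hp.1 a) (Ne.symm hpa)
    obtain ⟨w0, _, hKw0⟩ := Finset.exists_ne_zero_of_sum_ne_zero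
      (by rw [(hch a).2]; norm_num : ∑ w, K a w ≠ 0)
    have hKpos : 0 < K a w0 := lt_of_le_of_ne ((hch a).1 w0) (Ne.symm hKw0)
    have hQW : 0 < outW p K w0 :=
      lt_of_lt_of_le (mul_pos hppos hKpos) (pK_le_outW p K hp.1 hch a w0)
    have hQX : 0 < condXW p K w0 a.1 := by
      apply div_pos _ hQW
      have h := pK_le_margWX p K hp.1 hch a.1 a.2 w0
      rw [Prod.mk.eta] at h
      exact lt_of_lt_of_le (mul_pos hppos hKpos) h
    have hQY : 0 < condYW p K w0 a.2 := by
      apply div_pos _ hQW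
      have h := pK_le_margWY p K hp.1 hch a.1 a.2 w0
      rw [Prod.mk.eta] at h
      exact lt_of_lt_of_le (mul_pos hppos hKpos) h
    have hterm : 0 < outW p K w0 *
        (if condXW p K w0 a.1 = 0 ∨ condYW p K w0 a.2 = 0 then 0 else
          (2 : ℝ) ^ (lam1 * (r1s + Real.logb 2 (condXW p K w0 a.1))
            + lam2 * (r2s + Real.logb 2 (condYW p K w0 a.2)))) := by
      rw [if_neg (by push_neg; exact ⟨ne_of_gt hQX, ne_of_gt hQY⟩)]
      positivity
    exact lt_of_lt_of_le hterm
      (Finset.single_le_sum (fun w _ => htermnn a w) (Finset.mem_univ w0))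
  set La : 𝒳 × 𝒴 → ℝ := fun a => -Real.logb 2 (Zf a) with hLadef
  have htwoLa : ∀ a, p a ≠ 0 → (2 : ℝ) ^ (La a) * Zf a = 1 := by
    intro a hpa
    rw [hLadef]
    rw [Real.rpow_neg (by norm_num : (0:ℝ) ≤ 2),
      Real.rpow_logb (by norm_num) (by norm_num) (hZpos a hpa)]
    exact inv_mul_cancel₀ (ne_of_gt (hZpos a hpa))
  set Kst : 𝒳 × 𝒴 → Fin k → ℝ := fun a w =>
    if p a = 0 then (1 : ℝ) / k else
      (if condXW p K w a.1 = 0 ∨ condYW p K w a.2 = 0 then 0 else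
        outW p K w * (2 : ℝ) ^ (La a + lam1 * (r1s + Real.logb 2 (condXW p K w a.1))
          + lam2 * (r2s + Real.logb 2 (condYW p K w a.2)))) with hKstdef
  have hKst_eval : ∀ a w, Kst a w = if p a = 0 then (1 : ℝ) / k else
      (if condXW p K w a.1 = 0 ∨ condYW p K w a.2 = 0 then 0 else
        outW p K w * (2 : ℝ) ^ (La a + lam1 * (r1s + Real.logb 2 (condXW p K w a.1))
          + lam2 * (r2s + Real.logb 2 (condYW p K w a.2)))) := fun a w => rfl
  have hKstval : ∀ a w, p a ≠ 0 → Kst a w =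
      (2 : ℝ) ^ (La a) * (outW p K w *
        (if condXW p K w a.1 = 0 ∨ condYW p K w a.2 = 0 then 0 else
          (2 : ℝ) ^ (lam1 * (r1s + Real.logb 2 (condXW p K w a.1))
            + lam2 * (r2s + Real.logb 2 (condYW p K w a.2))))) := by
    intro a w hpa
    rw [hKst_eval a w, if_neg hpa]
    split
    · rw [mul_zero, mul_zero]
    · rw [show La a + lam1 * (r1s + Real.logb 2 (condXW p K w a.1))
          + lam2 * (r2s + Real.logb 2 (condYW p K w a.2))
          = La a + (lam1 * (r1s + Real.logb 2 (condXW p K w a.1))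
            + lam2 * (r2s + Real.logb 2 (condYW p K w a.2))) from by ring,
        Real.rpow_add (by norm_num : (0:ℝ) < 2)]
      ring
  have hKstch : IsChannel Kst := by
    intro a
    constructor
    · intro w
      rw [hKst_eval a w]
      by_cases hpa : p a = 0
      · rw [if_pos hpa]
        exact div_nonneg zero_le_one (Nat.cast_nonneg k)
      · rw [if_neg hpa]
        split
        · exact le_refl 0
        · exact mul_nonneg (outW_nonneg p K hp.1 hch w)
            (le_of_lt (Real.rpow_pos_of_pos (by norm_num) _))
    · by_cases hpa : p a = 0
      · rw [show (∑ w, Kst a w) = ∑ w : Fin k, (1:ℝ)/k from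
          Finset.sum_congr rfl fun w _ => by rw [hKst_eval a w, if_pos hpa]]
        rw [Finset.sum_const, Finset.card_univ, Fintype.card_fin, nsmul_eq_mul,
          mul_one_div, div_self (Nat.cast_ne_zero.2 (Nat.pos_iff_ne_zero.1 hkpos))]
      · rw [Finset.sum_congr rfl fun w _ => hKstval a w hpa, ← Finset.mul_sum]
        rw [show (∑ w, outW p K w *
          (if condXW p K w a.1 = 0 ∨ condYW p K w a.2 = 0 then 0 else
            (2 : ℝ) ^ (lam1 * (r1s + Real.logb 2 (condXW p K w a.1))
              + lam2 * (r2s + Real.logb 2 (condYW p K w a.2))))) = Zf a from rfl]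
        exact htwoLa a hpa
  -- absolute continuity
  have hacW : ∀ w, outW p K w = 0 → outW p Kst w = 0 := by
    intro w h
    rw [outW]
    refine Finset.sum_eq_zero fun a _ => ?_
    by_cases hpa : p a = 0
    · rw [hpa, zero_mul]
    · have hcx : condXW p K w a.1 = 0 := by
        rw [show condXW p K w a.1 = margWX p K (w, a.1) / outW p K w from rfl, h, div_zero]
      rw [hKst_eval a w, if_neg hpa, if_pos (Or.inl hcx), mul_zero]
  have hacX : ∀ w x, margWX p K (w, x) = 0 → margWX p Kst (w, x) = 0 := by
    intro w x h
    rw [margWX]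
    refine Finset.sum_eq_zero fun y _ => ?_
    by_cases hpa : p (x, y) = 0
    · rw [hpa, zero_mul]
    · have hcx : condXW p K w x = 0 := by
        rw [show condXW p K w x = margWX p K (w, x) / outW p K w from rfl, h, zero_div]
      rw [hKst_eval (x, y) w, if_neg hpa, if_pos (Or.inl hcx), mul_zero]
  have hacY : ∀ w y, margWY p K (w, y) = 0 → margWY p Kst (w, y) = 0 := by
    intro w y h
    rw [margWY]
    refine Finset.sum_eq_zero fun x _ => ?_
    by_cases hpa : p (x, y) = 0
    · rw [hpa, zero_mul]
    · have hcy : condYW p K w y = 0 := by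
        rw [show condYW p K w y = margWY p K (w, y) / outW p K w from rfl, h, zero_div]
      rw [hKst_eval (x, y) w, if_neg hpa, if_pos (Or.inr hcy), mul_zero]
  -- the exact identity for the tilted channel
  have E1 : ∑ a, ∑ w, p a * Kst a w *
      (Real.logb 2 (Kst a w / outW p K w)
        + lam1 * (-Real.logb 2 (condXW p K w a.1) - r1s)
        + lam2 * (-Real.logb 2 (condYW p K w a.2) - r2s))
      = ∑ a, p a * La a := by
    refine Finset.sum_congr rfl fun a _ => ?_
    by_cases hpa : p a = 0
    · rw [hpa]
      simp
    · have per : ∀ w, Kst a w *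
          (Real.logb 2 (Kst a w / outW p K w)
            + lam1 * (-Real.logb 2 (condXW p K w a.1) - r1s)
            + lam2 * (-Real.logb 2 (condYW p K w a.2) - r2s))
          = Kst a w * La a := by
        intro w
        rcases eq_or_ne (Kst a w) 0 with h0 | hne
        · rw [h0, zero_mul, zero_mul]
        · have hguard : ¬(condXW p K w a.1 = 0 ∨ condYW p K w a.2 = 0) := by
            intro hg
            apply hne
            rw [hKst_eval a w, if_neg hpa, if_pos hg]
          have hKstv : Kst a w = outW p K w
              * (2 : ℝ) ^ (La a + lam1 * (r1s + Real.logb 2 (condXW p K w a.1))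
                + lam2 * (r2s + Real.logb 2 (condYW p K w a.2))) := by
            rw [hKst_eval a w, if_neg hpa, if_neg hguard]
          have hQW : outW p K w ≠ 0 := by
            intro h
            apply hne
            rw [hKstv, h, zero_mul]
          have hlogb : Real.logb 2 (Kst a w / outW p K w)
              = La a + lam1 * (r1s + Real.logb 2 (condXW p K w a.1))
                + lam2 * (r2s + Real.logb 2 (condYW p K w a.2)) := by
            rw [hKstv, mul_div_cancel_left₀ _ hQW,
              Real.logb_rpow (by norm_num) (by norm_num)]
          rw [hlogb]
          ring
      calc ∑ w, p a * Kst a w *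
          (Real.logb 2 (Kst a w / outW p K w)
            + lam1 * (-Real.logb 2 (condXW p K w a.1) - r1s)
            + lam2 * (-Real.logb 2 (condYW p K w a.2) - r2s))
          = ∑ w, p a * La a * Kst a w := by
            refine Finset.sum_congr rfl fun w _ => ?_
            rw [mul_assoc, per w]
            ring
      _ = p a * La a * ∑ w, Kst a w := by rw [← Finset.mul_sum]
      _ = p a * La a := by rw [(hKstch a).2, mul_one]
  -- normalization
  have hnorm : ∑ a, ∑ w, p a * Kst a w = 1 := by
    calc ∑ a, ∑ w, p a * Kst a w = ∑ a : 𝒳 × 𝒴, p a := by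
          refine Finset.sum_congr rfl fun a _ => ?_
          rw [← Finset.mul_sum, (hKstch a).2, mul_one]
    _ = 1 := hp.2
  -- expansion of the bracket sum
  have hexpand : ∑ a, ∑ w, p a * Kst a w *
      (Real.logb 2 (Kst a w / outW p K w)
        + lam1 * (-Real.logb 2 (condXW p K w a.1) - r1s)
        + lam2 * (-Real.logb 2 (condYW p K w a.2) - r2s))
      = (∑ a, ∑ w, p a * Kst a w * Real.logb 2 (Kst a w / outW p K w))
        + lam1 * ((∑ a, ∑ w, p a * Kst a w * (-Real.logb 2 (condXW p K w a.1))) - r1s)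
        + lam2 * ((∑ a, ∑ w, p a * Kst a w * (-Real.logb 2 (condYW p K w a.2))) - r2s) := by
    have per : ∀ (a : 𝒳 × 𝒴) w, p a * Kst a w *
        (Real.logb 2 (Kst a w / outW p K w)
          + lam1 * (-Real.logb 2 (condXW p K w a.1) - r1s)
          + lam2 * (-Real.logb 2 (condYW p K w a.2) - r2s))
        = p a * Kst a w * Real.logb 2 (Kst a w / outW p K w)
          + lam1 * (p a * Kst a w * (-Real.logb 2 (condXW p K w a.1)))
          + lam2 * (p a * Kst a w * (-Real.logb 2 (condYW p K w a.2)))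
          - (lam1 * r1s + lam2 * r2s) * (p a * Kst a w) := fun a w => by ring
    rw [Finset.sum_congr rfl fun a (_ : a ∈ univ) => Finset.sum_congr rfl
      (fun w (_ : w ∈ univ) => per a w)]
    have distrib : ∀ (f g h e : (𝒳 × 𝒴) → Fin k → ℝ),
        ∑ a, ∑ w, (f a w + lam1 * g a w + lam2 * h a w - (lam1 * r1s + lam2 * r2s) * e a w)
        = (∑ a, ∑ w, f a w) + lam1 * (∑ a, ∑ w, g a w) + lam2 * (∑ a, ∑ w, h a w)
          - (lam1 * r1s + lam2 * r2s) * (∑ a, ∑ w, e a w) := by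
      intro f g h e
      rw [Finset.mul_sum, Finset.mul_sum, Finset.mul_sum]
      rw [← Finset.sum_add_distrib, ← Finset.sum_add_distrib, ← Finset.sum_sub_distrib]
      refine Finset.sum_congr rfl fun a _ => ?_
      rw [Finset.mul_sum, Finset.mul_sum, Finset.mul_sum]
      rw [← Finset.sum_add_distrib, ← Finset.sum_add_distrib, ← Finset.sum_sub_distrib]
    rw [distrib (fun a w => p a * Kst a w * Real.logb 2 (Kst a w / outW p K w))
      (fun a w => p a * Kst a w * (-Real.logb 2 (condXW p K w a.1)))
      (fun a w => p a * Kst a w * (-Real.logb 2 (condYW p K w a.2)))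
      (fun a w => p a * Kst a w), hnorm, mul_one]
    ring
  -- Gibbs bounds
  have E2 := gibbs_out hp K Kst hch hKstch hacW
  have E3 := gibbs_condX hp K Kst hch hKstch hacW hacX
  have E4 := gibbs_condY hp K Kst hch hKstch hacW hacY
  -- put everything together
  have hGbound : mutInfoW p Kst + lam1 * (condEntX p Kst - r1s)
      + lam2 * (condEntY p Kst - r2s) ≤ ∑ a, p a * La a := by
    rw [← E1, hexpand]
    have h3 := mul_le_mul_of_nonneg_left E3 (le_of_lt hl1)
    have h4 := mul_le_mul_of_nonneg_left E4 (le_of_lt hl2)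
    nlinarith [h3, h4, E2, hl1.le, hl2.le]
  have hfeas : Rgw p (condEntX p Kst) (condEntY p Kst) ≤ mutInfoW p Kst :=
    Rgw_le_of_mem hp ⟨k, hkcard, Kst, hKstch, le_rfl, le_rfl, rfl⟩
  have hhyp := Rgw_hyperplane hp hr1 hr2 hd1 hd2
    (condEntX_nonneg p Kst hp hKstch) (condEntY_nonneg p Kst hp hKstch)
  have final : Rgw p r1s r2s ≤ ∑ a, p a * La a := by linarith
  calc Rgw p r1s r2s ≤ ∑ a, p a * La a := final
  _ = ∑ a : 𝒳 × 𝒴, p a *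
      Lam r1s r2s lam1 lam2 (outW p K) (condXW p K) (condYW p K) a.1 a.2 :=
    Finset.sum_congr rfl fun a _ => by rw [hLamZ a]

end

end GWAux

open GWAux Real Finset in
/-- For an optimal test channel `P*_{W|XY}` achieving
`R(r1*,r2*|P_XY)`, with induced output distribution `P_{W*}` and conditional
distributions `P_{X|W*}`, `P_{Y|W*}`: for every `(x,y)` in the support of
`P_XY` and every `w` in the support of `P*_{W|XY}(·|x,y)`,
`Λ(x,y|P_{W*},P_{X|W*},P_{Y|W*},λ1*,λ2*)
  = log(P*_{W|XY}(w|x,y)/P_{W*}(w)) + λ1*(log(1/P_{X|W*}(x|w)) - r1*)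
    + λ2*(log(1/P_{Y|W*}(y|w)) - r2*)`;
in particular the right-hand side does not depend on the choice of such `w`. -/
theorem Lambda_explicit_form
    {𝒳 𝒴 : Type*} [Fintype 𝒳] [Fintype 𝒴]
    (p : 𝒳 × 𝒴 → ℝ) (hp : IsProb p)
    (r1s r2s : ℝ) (hr1 : 0 < r1s) (hr2 : 0 < r2s)
    (hR : 0 < Rgw p r1s r2s)
    (lam1 lam2 : ℝ)
    (hd1 : HasDerivAt (fun r => Rgw p r r2s) (-lam1) r1s)
    (hd2 : HasDerivAt (fun r => Rgw p r1s r) (-lam2) r2s)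
    (hl1 : 0 < lam1) (hl2 : 0 < lam2)
    {k : ℕ} (K : 𝒳 × 𝒴 → Fin k → ℝ) (hK : IsOptChannel p r1s r2s K) :
    ∀ x y, 0 < p (x, y) → ∀ w, 0 < K (x, y) w →
      Lam r1s r2s lam1 lam2 (outW p K) (condXW p K) (condYW p K) x y
        = Real.logb 2 (K (x, y) w / outW p K w)
          + lam1 * (-Real.logb 2 (condXW p K w x) - r1s)
          + lam2 * (-Real.logb 2 (condYW p K w y) - r2s) := by
  classical
  obtain ⟨hkcard, hch, hle1, hle2, hopt⟩ := hK
  have hKfull : IsOptChannel p r1s r2s K := ⟨hkcard, hch, hle1, hle2, hopt⟩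
  have hact1 : condEntX p K = r1s := active1 hp hd1 hl1 hKfull
  have hact2 : condEntY p K = r2s := active2 hp hd2 hl2 hKfull
  have hglobal := sum_Lam_ge hp hr1 hr2 hd1 hd2 hl1 hl2 hKfull
  -- the partition function
  set Zf : 𝒳 × 𝒴 → ℝ := fun a => ∑ w, outW p K w *
    (if condXW p K w a.1 = 0 ∨ condYW p K w a.2 = 0 then 0 else
      (2 : ℝ) ^ (lam1 * (r1s + Real.logb 2 (condXW p K w a.1))
        + lam2 * (r2s + Real.logb 2 (condYW p K w a.2)))) with hZdef
  have hLamZ : ∀ a : 𝒳 × 𝒴,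
      Lam r1s r2s lam1 lam2 (outW p K) (condXW p K) (condYW p K) a.1 a.2
        = -Real.logb 2 (Zf a) := fun a => rfl
  have htermnn : ∀ (a : 𝒳 × 𝒴) w, 0 ≤ outW p K w *
      (if condXW p K w a.1 = 0 ∨ condYW p K w a.2 = 0 then 0 else
        (2 : ℝ) ^ (lam1 * (r1s + Real.logb 2 (condXW p K w a.1))
          + lam2 * (r2s + Real.logb 2 (condYW p K w a.2)))) := by
    intro a w
    apply mul_nonneg (outW_nonneg p K hp.1 hch w)
    split
    · exact le_refl 0
    · positivity
  have hZpos : ∀ a, p a ≠ 0 → 0 < Zf a := by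
    intro a hpa
    have hppos : 0 < p a := lt_of_le_of_ne (hp.1 a) (Ne.symm hpa)
    obtain ⟨w0, _, hKw0⟩ := Finset.exists_ne_zero_of_sum_ne_zero
      (by rw [(hch a).2]; norm_num : ∑ w, K a w ≠ 0)
    have hKpos : 0 < K a w0 := lt_of_le_of_ne ((hch a).1 w0) (Ne.symm hKw0)
    have hQW : 0 < outW p K w0 :=
      lt_of_lt_of_le (mul_pos hppos hKpos) (pK_le_outW p K hp.1 hch a w0)
    have hQX : 0 < condXW p K w0 a.1 := by
      apply div_pos _ hQW
      have h := pK_le_margWX p K hp.1 hch a.1 a.2 w0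
      rw [Prod.mk.eta] at h
      exact lt_of_lt_of_le (mul_pos hppos hKpos) h
    have hQY : 0 < condYW p K w0 a.2 := by
      apply div_pos _ hQW
      have h := pK_le_margWY p K hp.1 hch a.1 a.2 w0
      rw [Prod.mk.eta] at h
      exact lt_of_lt_of_le (mul_pos hppos hKpos) h
    have hterm : 0 < outW p K w0 *
        (if condXW p K w0 a.1 = 0 ∨ condYW p K w0 a.2 = 0 then 0 else
          (2 : ℝ) ^ (lam1 * (r1s + Real.logb 2 (condXW p K w0 a.1))
            + lam2 * (r2s + Real.logb 2 (condYW p K w0 a.2)))) := by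
      rw [if_neg (by push_neg; exact ⟨ne_of_gt hQX, ne_of_gt hQY⟩)]
      positivity
    exact lt_of_lt_of_le hterm
      (Finset.single_le_sum (fun w _ => htermnn a w) (Finset.mem_univ w0))
  -- the tilted information density of the optimal channel itself
  set E : 𝒳 × 𝒴 → Fin k → ℝ := fun a w =>
    Real.logb 2 (K a w / outW p K w)
      + lam1 * (-Real.logb 2 (condXW p K w a.1) - r1s)
      + lam2 * (-Real.logb 2 (condYW p K w a.2) - r2s) with hEdef
  set S : 𝒳 × 𝒴 → ℝ := fun a => ∑ w, K a w * E a w with hSdef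
  -- the expected value of E equals R(r1*,r2*)
  have hnorm : ∑ a, ∑ w, p a * K a w = 1 := by
    calc ∑ a, ∑ w, p a * K a w = ∑ a : 𝒳 × 𝒴, p a := by
          refine Finset.sum_congr rfl fun a _ => ?_
          rw [← Finset.mul_sum, (hch a).2, mul_one]
    _ = 1 := hp.2
  have hGK : ∑ a, p a * S a = Rgw p r1s r2s := by
    have step1 : ∑ a, p a * S a = ∑ a, ∑ w, p a * K a w * E a w := by
      refine Finset.sum_congr rfl fun a _ => ?_
      rw [hSdef]
      rw [Finset.mul_sum]
      exact Finset.sum_congr rfl fun w _ => by ring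
    have per : ∀ (a : 𝒳 × 𝒴) w, p a * K a w * E a w
        = p a * K a w * Real.logb 2 (K a w / outW p K w)
          + lam1 * (p a * K a w * (-Real.logb 2 (condXW p K w a.1)))
          + lam2 * (p a * K a w * (-Real.logb 2 (condYW p K w a.2)))
          - (lam1 * r1s + lam2 * r2s) * (p a * K a w) := by
      intro a w
      rw [hEdef]
      ring
    have distrib : ∀ (f g h e : (𝒳 × 𝒴) → Fin k → ℝ),
        ∑ a, ∑ w, (f a w + lam1 * g a w + lam2 * h a w
          - (lam1 * r1s + lam2 * r2s) * e a w)
        = (∑ a, ∑ w, f a w) + lam1 * (∑ a, ∑ w, g a w) + lam2 * (∑ a, ∑ w, h a w)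
          - (lam1 * r1s + lam2 * r2s) * (∑ a, ∑ w, e a w) := by
      intro f g h e
      rw [Finset.mul_sum, Finset.mul_sum, Finset.mul_sum]
      rw [← Finset.sum_add_distrib, ← Finset.sum_add_distrib, ← Finset.sum_sub_distrib]
      refine Finset.sum_congr rfl fun a _ => ?_
      rw [Finset.mul_sum, Finset.mul_sum, Finset.mul_sum]
      rw [← Finset.sum_add_distrib, ← Finset.sum_add_distrib, ← Finset.sum_sub_distrib]
    rw [step1,
      Finset.sum_congr rfl fun a (_ : a ∈ univ) => Finset.sum_congr rfl
        (fun w (_ : w ∈ univ) => per a w),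
      distrib (fun a w => p a * K a w * Real.logb 2 (K a w / outW p K w))
        (fun a w => p a * K a w * (-Real.logb 2 (condXW p K w a.1)))
        (fun a w => p a * K a w * (-Real.logb 2 (condYW p K w a.2)))
        (fun a w => p a * K a w),
      hnorm, ← mutInfo_eq p K hp hch, ← condEntX_eq p K hp hch, ← condEntY_eq p K hp hch,
      hact1, hact2, hopt]
    ring
  -- pointwise Jensen bound and the sandwich
  have hexp2 : ∀ t : ℝ, (2 : ℝ) ^ t = Real.exp (t * Real.log 2) := by
    intro t
    rw [Real.rpow_def_of_pos (by norm_num : (0:ℝ) < 2), mul_comm]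
  have hEZle : ∀ a, p a ≠ 0 →
      ∑ w, K a w * Real.exp (-(E a w) * Real.log 2) ≤ Zf a := by
    intro a hpa
    have hppos : 0 < p a := lt_of_le_of_ne (hp.1 a) (Ne.symm hpa)
    refine Finset.sum_le_sum fun w _ => ?_
    rcases eq_or_ne (K a w) 0 with h0 | hne
    · rw [h0, zero_mul]
      exact htermnn a w
    · have hKpos : 0 < K a w := lt_of_le_of_ne ((hch a).1 w) (Ne.symm hne)
      have hQW : 0 < outW p K w :=
        lt_of_lt_of_le (mul_pos hppos hKpos) (pK_le_outW p K hp.1 hch a w)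
      have hQX : 0 < condXW p K w a.1 := by
        apply div_pos _ hQW
        have h := pK_le_margWX p K hp.1 hch a.1 a.2 w
        rw [Prod.mk.eta] at h
        exact lt_of_lt_of_le (mul_pos hppos hKpos) h
      have hQY : 0 < condYW p K w a.2 := by
        apply div_pos _ hQW
        have h := pK_le_margWY p K hp.1 hch a.1 a.2 w
        rw [Prod.mk.eta] at h
        exact lt_of_lt_of_le (mul_pos hppos hKpos) h
      have hsplit : -(E a w) = -Real.logb 2 (K a w / outW p K w)
          + (lam1 * (r1s + Real.logb 2 (condXW p K w a.1))
            + lam2 * (r2s + Real.logb 2 (condYW p K w a.2))) := by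
        rw [hEdef]
        ring
      have hratio : (2 : ℝ) ^ (-Real.logb 2 (K a w / outW p K w))
          = outW p K w / K a w := by
        rw [Real.rpow_neg (by norm_num : (0:ℝ) ≤ 2),
          Real.rpow_logb (by norm_num) (by norm_num) (div_pos hKpos hQW), inv_div]
      have hval : K a w * Real.exp (-(E a w) * Real.log 2)
          = outW p K w * (2 : ℝ) ^ (lam1 * (r1s + Real.logb 2 (condXW p K w a.1))
            + lam2 * (r2s + Real.logb 2 (condYW p K w a.2))) := by
        rw [← hexp2 (-(E a w)), hsplit, Real.rpow_add (by norm_num : (0:ℝ) < 2), hratio]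
        rw [show K a w * (outW p K w / K a w
            * (2 : ℝ) ^ (lam1 * (r1s + Real.logb 2 (condXW p K w a.1))
              + lam2 * (r2s + Real.logb 2 (condYW p K w a.2))))
          = outW p K w * (2 : ℝ) ^ (lam1 * (r1s + Real.logb 2 (condXW p K w a.1))
              + lam2 * (r2s + Real.logb 2 (condYW p K w a.2))) * (K a w / K a w)
          from by ring, div_self hne, mul_one]
      rw [hval, if_neg (by push_neg; exact ⟨ne_of_gt hQX, ne_of_gt hQY⟩)]
  have hJen : ∀ a : 𝒳 × 𝒴, Real.exp (-(S a) * Real.log 2)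
      ≤ ∑ w, K a w * Real.exp (-(E a w) * Real.log 2) := by
    intro a
    have hmap := convexOn_exp.map_sum_le (t := Finset.univ) (w := K a)
      (p := fun w => -(E a w) * Real.log 2) (fun w _ => (hch a).1 w) (hch a).2
      (fun w _ => Set.mem_univ _)
    have harg : ∑ w, K a w • (-(E a w) * Real.log 2) = -(S a) * Real.log 2 := by
      rw [hSdef]
      rw [show -(∑ w, K a w * E a w) * Real.log 2
          = ∑ w, -(K a w * E a w) * Real.log 2 from by
        rw [← Finset.sum_neg_distrib, ← Finset.sum_mul]]
      refine Finset.sum_congr rfl fun w _ => ?_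
      rw [smul_eq_mul]
      ring
    rw [harg] at hmap
    refine le_trans hmap (le_of_eq ?_)
    refine Finset.sum_congr rfl fun w _ => ?_
    rw [smul_eq_mul]
  have hLam_le : ∀ a : 𝒳 × 𝒴, p a ≠ 0 →
      Lam r1s r2s lam1 lam2 (outW p K) (condXW p K) (condYW p K) a.1 a.2 ≤ S a := by
    intro a hpa
    have h1 : (2 : ℝ) ^ (-(S a)) ≤ Zf a := by
      rw [hexp2]
      exact le_trans (hJen a) (hEZle a hpa)
    have h2 : -(S a) ≤ Real.logb 2 (Zf a) := by
      have h3 := Real.logb_le_logb_of_le (by norm_num : (1:ℝ) < 2)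
        (Real.rpow_pos_of_pos (by norm_num) (-(S a))) h1
      rwa [Real.logb_rpow (by norm_num) (by norm_num)] at h3
    rw [hLamZ a]
    linarith
  -- all the pointwise inequalities are equalities
  have hzero : ∀ a ∈ Finset.univ, p a *
      (S a - Lam r1s r2s lam1 lam2 (outW p K) (condXW p K) (condYW p K) a.1 a.2)
        = 0 := by
    have hsum0 : ∑ a, p a *
        (S a - Lam r1s r2s lam1 lam2 (outW p K) (condXW p K) (condYW p K) a.1 a.2)
        = ∑ a, p a * S a
          - ∑ a, p a * Lam r1s r2s lam1 lam2 (outW p K) (condXW p K) (condYW p K) a.1 a.2 := by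
      rw [← Finset.sum_sub_distrib]
      exact Finset.sum_congr rfl fun a _ => by ring
    have hnn : ∀ a ∈ Finset.univ, 0 ≤ p a *
        (S a - Lam r1s r2s lam1 lam2 (outW p K) (condXW p K) (condYW p K) a.1 a.2) := by
      intro a _
      rcases eq_or_ne (p a) 0 with h0 | hne
      · rw [h0, zero_mul]
      · exact mul_nonneg (hp.1 a) (by linarith [hLam_le a hne])
    have hle0 : ∑ a, p a *
        (S a - Lam r1s r2s lam1 lam2 (outW p K) (condXW p K) (condYW p K) a.1 a.2)
          ≤ 0 := by
      rw [hsum0, hGK]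
      linarith [hglobal]
    have heq0 : ∑ a, p a *
        (S a - Lam r1s r2s lam1 lam2 (outW p K) (condXW p K) (condYW p K) a.1 a.2)
          = 0 :=
      le_antisymm hle0 (Finset.sum_nonneg hnn)
    exact (Finset.sum_eq_zero_iff_of_nonneg hnn).1 heq0
  -- final extraction
  intro x y hpxy w0 hKw0
  set a : 𝒳 × 𝒴 := (x, y) with hadef
  have hpa : p a ≠ 0 := ne_of_gt hpxy
  have hSL : S a = Lam r1s r2s lam1 lam2 (outW p K) (condXW p K) (condYW p K) a.1 a.2 := by
    have := hzero a (Finset.mem_univ a)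
    rcases mul_eq_zero.1 this with h | h
    · exact absurd h hpa
    · linarith [sub_eq_zero.1 h]
  -- equality in the sandwich
  have hZS : Zf a = Real.exp (-(S a) * Real.log 2) := by
    have h1 : (2 : ℝ) ^ (-(S a)) = Zf a := by
      rw [show -(S a) = Real.logb 2 (Zf a) from by
        have := hSL
        rw [hLamZ a] at this
        linarith]
      exact Real.rpow_logb (by norm_num) (by norm_num) (hZpos a hpa)
    rw [← h1, hexp2]
  have heq : ∑ w, K a w * Real.exp (-(E a w) * Real.log 2)
      = Real.exp (-(S a) * Real.log 2) := by
    have h1 := hJen a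
    have h2 := hEZle a hpa
    rw [hZS] at h2
    linarith
  -- tangent line argument
  set c : ℝ := Real.exp (-(S a) * Real.log 2) with hcdef
  have hcpos : 0 < c := Real.exp_pos _
  have hterm_ge : ∀ w, K a w * (c * ((S a - E a w) * Real.log 2 + 1))
      ≤ K a w * Real.exp (-(E a w) * Real.log 2) := by
    intro w
    apply mul_le_mul_of_nonneg_left _ ((hch a).1 w)
    have hexpadd : Real.exp (-(E a w) * Real.log 2)
        = c * Real.exp ((S a - E a w) * Real.log 2) := by
      rw [hcdef, ← Real.exp_add]
      congr 1
      ring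
    rw [hexpadd]
    exact mul_le_mul_of_nonneg_left (Real.add_one_le_exp _) (le_of_lt hcpos)
  have hzsum : ∑ w, K a w * (S a - E a w) = 0 := by
    rw [Finset.sum_congr rfl (fun w _ => by ring :
      ∀ w ∈ Finset.univ, K a w * (S a - E a w) = S a * K a w - K a w * E a w),
      Finset.sum_sub_distrib, ← Finset.mul_sum, (hch a).2, mul_one]
    rw [show (∑ w, K a w * E a w) = S a from rfl]
    ring
  have hsum_lhs : ∑ w, K a w * (c * ((S a - E a w) * Real.log 2 + 1)) = c := by
    rw [Finset.sum_congr rfl (fun w _ => by ring :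
      ∀ w ∈ Finset.univ, K a w * (c * ((S a - E a w) * Real.log 2 + 1))
        = c * Real.log 2 * (K a w * (S a - E a w)) + c * K a w),
      Finset.sum_add_distrib, ← Finset.mul_sum, ← Finset.mul_sum, hzsum, mul_zero,
      (hch a).2, mul_one, zero_add]
  have hall : ∀ w ∈ Finset.univ, K a w * Real.exp (-(E a w) * Real.log 2)
      - K a w * (c * ((S a - E a w) * Real.log 2 + 1)) = 0 := by
    apply (Finset.sum_eq_zero_iff_of_nonneg
      (fun w _ => by linarith [hterm_ge w])).1
    rw [Finset.sum_sub_distrib, heq, hsum_lhs]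
    ring
  have hw0 : Real.exp (-(E a w0) * Real.log 2)
      = c * ((S a - E a w0) * Real.log 2 + 1) := by
    have h := hall w0 (Finset.mem_univ w0)
    have h2 : K a w0 * Real.exp (-(E a w0) * Real.log 2)
        = K a w0 * (c * ((S a - E a w0) * Real.log 2 + 1)) := by linarith
    exact mul_left_cancel₀ (ne_of_gt hKw0) h2
  have hES : E a w0 = S a := by
    by_contra hne
    have hx : (S a - E a w0) * Real.log 2 ≠ 0 :=
      mul_ne_zero (sub_ne_zero.2 fun h => hne h.symm)
        (ne_of_gt (Real.log_pos (by norm_num)))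
    have hlt := Real.add_one_lt_exp hx
    have hexpadd : Real.exp (-(E a w0) * Real.log 2)
        = c * Real.exp ((S a - E a w0) * Real.log 2) := by
      rw [hcdef, ← Real.exp_add]
      congr 1
      ring
    rw [hexpadd] at hw0
    have := mul_lt_mul_of_pos_left hlt hcpos
    linarith
  have hgoal : Lam r1s r2s lam1 lam2 (outW p K) (condXW p K) (condYW p K) x y
      = E a w0 := by
    rw [show Lam r1s r2s lam1 lam2 (outW p K) (condXW p K) (condYW p K) x y
        = Lam r1s r2s lam1 lam2 (outW p K) (condXW p K) (condYW p K) a.1 a.2 from rfl,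
      ← hSL, hES]
  rw [hgoal, hEdef]
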